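/- arXiv:1603.06450 — 3 statements merged into one kernel-verified Lean document; each statement's English description precedes it below -/
import Mathlib

section
/- Let G be a countable discrete group and let X be a compact metrizable group on which G acts by continuous automorphisms, with Haar probability measure m_X. If the action of G on (X, m_X) is ergodic, then it is weakly mixing, i.e., the diagonal action of G on (X × X, m_X ⊗ m_X) is ergodic. -/
open MeasureTheory Filter Topology
open scoped ENNReal NNReal BigOperators Classical

namespace SoficPaper

/-- The proportion of indices `j ∈ Fin n` satisfying `P`. -/
noncomputable def prop {n : ℕ} (P : Fin n → Prop) : ℝ :=
  ((Finset.univ.filter P).card : ℝ) / n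

/-- A sofic approximation of a group `G`. -/
def IsSoficApprox {G : Type*} [Group G] (d : ℕ → ℕ)
    (σ : ∀ i, G → Equiv.Perm (Fin (d i))) : Prop :=
  (∀ g h : G, Tendsto (fun i => prop fun j => σ i g (σ i h j) = σ i (g * h) j)
      atTop (nhds 1)) ∧
  ∀ g : G, g ≠ 1 → Tendsto (fun i => prop fun j => σ i g j = j) atTop (nhds 0)

/-- The metric `ρ₂` on `X^n` associated with a pseudometric `ρ` on `X`. -/
noncomputable def rho2 {X : Type*} (ρ : X → X → ℝ) {n : ℕ} (x y : Fin n → X) : ℝ :=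
  Real.sqrt ((n : ℝ)⁻¹ * ∑ j, ρ (x j) (y j) ^ 2)

/-- A continuous pseudometric. -/
structure IsCtsPseudoMetric {X : Type*} [TopologicalSpace X] (ρ : X → X → ℝ) : Prop where
  refl : ∀ x, ρ x x = 0
  symm : ∀ x y, ρ x y = ρ y x
  triangle : ∀ x y z, ρ x z ≤ ρ x y + ρ y z
  continuous : Continuous fun p : X × X => ρ p.1 p.2

/-- A dynamically generating pseudometric. -/
def IsDynGenerating {G X : Type*} (act : G → X → X) (ρ : X → X → ℝ) : Prop :=
  ∀ x y : X, x ≠ y → ∃ g : G, 0 < ρ (act g x) (act g y)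

/-- An action of `G` on `X` by homeomorphisms. -/
structure IsActionByHomeos (G X : Type*) [Group G] [TopologicalSpace X]
    (act : G → X → X) : Prop where
  one : ∀ x, act 1 x = x
  mul : ∀ g h x, act (g * h) x = act g (act h x)
  continuous : ∀ g, Continuous (act g)

/-- An action of `G` on a topological group `X` by continuous automorphisms. -/
structure IsActionByAutomorphisms (G X : Type*) [Group G] [TopologicalSpace X] [Group X]
    (act : G → X → X) : Prop where
  one : ∀ x, act 1 x = x
  mul : ∀ g h x, act (g * h) x = act g (act h x)
  continuous : ∀ g, Continuous (act g)
  map_mul : ∀ g x y, act g (x * y) = act g x * act g y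

/-- A compatible bi-invariant metric on a compact topological group: a continuous
separating pseudometric which is invariant under both left and right translations. -/
structure IsCompatBiInvMetric {X : Type*} [TopologicalSpace X] [Group X]
    (ρ : X → X → ℝ) : Prop where
  refl : ∀ x, ρ x x = 0
  symm : ∀ x y, ρ x y = ρ y x
  triangle : ∀ x y z, ρ x z ≤ ρ x y + ρ y z
  continuous : Continuous fun p : X × X => ρ p.1 p.2
  pos : ∀ x y, x ≠ y → 0 < ρ x y
  biinv : ∀ a b x y, ρ (a * x * b) (a * y * b) = ρ x y

/-- The space `Map(ρ, F, δ, σᵢ)` of topological microstates. -/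
def MapSp {G X : Type*} (act : G → X → X) (ρ : X → X → ℝ) {n : ℕ} (F : Finset G) (δ : ℝ)
    (σ : G → Equiv.Perm (Fin n)) : Set (Fin n → X) :=
  {φ | ∀ g ∈ F, rho2 ρ (fun j => act g (φ j)) (fun j => φ (σ g j)) < δ}

/-- The space `Map_μ(ρ, F, L, δ, σᵢ)` of measure-theoretic microstates; the integral of
`f` against the empirical distribution `φ_* u_n` is written as the average `n⁻¹ ∑ j, f (φ j)`. -/
def MapMeas {G X : Type*} [TopologicalSpace X] [MeasurableSpace X]
    (act : G → X → X) (ρ : X → X → ℝ) (μ : Measure X) {n : ℕ}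
    (F : Finset G) (L : Finset C(X, ℝ)) (δ : ℝ) (σ : G → Equiv.Perm (Fin n)) :
    Set (Fin n → X) :=
  {φ | φ ∈ MapSp act ρ F δ σ ∧ ∀ f ∈ L, |(n : ℝ)⁻¹ * ∑ j, f (φ j) - ∫ x, f x ∂μ| < δ}

/-- Local and empirical convergence `μᵢ →^{le} μ`. -/
def LEconv {G X : Type*} [Group G] [TopologicalSpace X] [MeasurableSpace X]
    (d : ℕ → ℕ) (σ : ∀ i, G → Equiv.Perm (Fin (d i)))
    (act : G → X → X) (ρ : X → X → ℝ) (μ : Measure X)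
    (μi : ∀ i, Measure (Fin (d i) → X)) : Prop :=
  ∀ (F : Finset G) (L : Finset C(X, ℝ)) (δ : ℝ), 0 < δ →
    Tendsto (fun i => (μi i (MapMeas act ρ μ F L δ (σ i))).toReal) atTop (nhds 1) ∧
    ∀ f ∈ L, Tendsto (fun i =>
      prop fun j : Fin (d i) => |(∫ φ, f (φ j) ∂(μi i)) - ∫ x, f x ∂μ| < δ)
      atTop (nhds 1)

/-- The diagonal action on `X × X`. -/
def diagAct {G X : Type*} (act : G → X → X) : G → X × X → X × X :=
  fun g p => (act g p.1, act g p.2)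

/-- The pseudometric `ρ̃` on `X × X` induced by `ρ`. -/
noncomputable def prodRho {X : Type*} (ρ : X → X → ℝ) : X × X → X × X → ℝ :=
  fun p q => Real.sqrt ((ρ p.1 q.1 ^ 2 + ρ p.2 q.2 ^ 2) / 2)

/-- The identification of `X^n × Y^n` with `(X × Y)^n`. -/
def zipFun {X Y : Type*} {n : ℕ} (φ : Fin n → X) (ψ : Fin n → Y) : Fin n → X × Y :=
  fun j => (φ j, ψ j)

/-- Local and doubly empirical convergence `μᵢ →^{lde} μ`:
`μᵢ ⊗ μᵢ →^{le} μ ⊗ μ` for the diagonal action. -/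
def LDEconv {G X : Type*} [Group G] [TopologicalSpace X] [MeasurableSpace X]
    (d : ℕ → ℕ) (σ : ∀ i, G → Equiv.Perm (Fin (d i)))
    (act : G → X → X) (ρ : X → X → ℝ) (μ : Measure X)
    (μi : ∀ i, Measure (Fin (d i) → X)) : Prop :=
  LEconv d σ (diagAct act) (prodRho ρ) (μ.prod μ)
    (fun i => Measure.map (fun p : (Fin (d i) → X) × (Fin (d i) → X) => zipFun p.1 p.2)
      ((μi i).prod (μi i)))

/-- `N_ε(S, ρ)`: the maximal cardinality of an `ε`-separated subset of `S`. -/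
noncomputable def sepNum {Z : Type*} (ρ : Z → Z → ℝ) (S : Set Z) (ε : ℝ) : ℝ :=
  sSup {r : ℝ | ∃ A : Finset Z, ↑A ⊆ S ∧
    (∀ x ∈ A, ∀ y ∈ A, x ≠ y → ε < ρ x y) ∧ r = (A.card : ℝ)}

/-- Topological sofic entropy of a factor `π : X → Y` in the presence of `X`. -/
noncomputable def htopPres {G X Y : Type*} [Group G]
    (d : ℕ → ℕ) (σ : ∀ i, G → Equiv.Perm (Fin (d i)))
    (act : G → X → X) (ρX : X → X → ℝ) (π : X → Y) (ρY : Y → Y → ℝ) : EReal :=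
  ⨆ ε ∈ Set.Ioi (0 : ℝ), ⨅ (F : Finset G), ⨅ δ ∈ Set.Ioi (0 : ℝ),
    Filter.limsup (fun i =>
      (((d i : ℝ)⁻¹ *
        Real.log (sepNum (rho2 ρY) ((fun φ => π ∘ φ) '' MapSp act ρX F δ (σ i)) ε) : ℝ) :
          EReal)) atTop

/-- Measure-theoretic sofic entropy of a factor `π : X → Y` in the presence of `(X, μ)`. -/
noncomputable def hmeasPres {G X Y : Type*} [Group G] [TopologicalSpace X] [MeasurableSpace X]
    (d : ℕ → ℕ) (σ : ∀ i, G → Equiv.Perm (Fin (d i)))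
    (act : G → X → X) (ρX : X → X → ℝ) (μ : Measure X) (π : X → Y) (ρY : Y → Y → ℝ) :
    EReal :=
  ⨆ ε ∈ Set.Ioi (0 : ℝ), ⨅ (F : Finset G), ⨅ (L : Finset C(X, ℝ)), ⨅ δ ∈ Set.Ioi (0 : ℝ),
    Filter.limsup (fun i =>
      (((d i : ℝ)⁻¹ *
        Real.log (sepNum (rho2 ρY) ((fun φ => π ∘ φ) '' MapMeas act ρX μ F L δ (σ i)) ε) : ℝ) :
          EReal)) atTop

/-- Topological sofic entropy. -/
noncomputable def htop {G X : Type*} [Group G]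
    (d : ℕ → ℕ) (σ : ∀ i, G → Equiv.Perm (Fin (d i)))
    (act : G → X → X) (ρ : X → X → ℝ) : EReal :=
  htopPres d σ act ρ id ρ

/-- Measure-theoretic sofic entropy. -/
noncomputable def hmeas {G X : Type*} [Group G] [TopologicalSpace X] [MeasurableSpace X]
    (d : ℕ → ℕ) (σ : ∀ i, G → Equiv.Perm (Fin (d i)))
    (act : G → X → X) (ρ : X → X → ℝ) (μ : Measure X) : EReal :=
  hmeasPres d σ act ρ μ id ρ

/-- `S_{ε,δ}(ν, ρ)`: the smallest cardinality of a finite set whose open `ε`-neighborhood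
has `ν`-measure at least `1 - δ`. -/
noncomputable def covNum {Z : Type*} [MeasurableSpace Z] (ρ : Z → Z → ℝ) (ν : Measure Z)
    (ε δ : ℝ) : ℝ :=
  sInf {r : ℝ | ∃ A : Finset Z,
    ENNReal.ofReal (1 - δ) ≤ ν {z | ∃ a ∈ A, ρ a z < ε} ∧ r = (A.card : ℝ)}

/-- The local and doubly empirical model-measure sofic entropy `h^{lde}`. -/
noncomputable def hlde {G X : Type*} [Group G] [TopologicalSpace X] [MeasurableSpace X]
    (d : ℕ → ℕ) (σ : ∀ i, G → Equiv.Perm (Fin (d i)))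
    (act : G → X → X) (ρ : X → X → ℝ) (μ : Measure X) : EReal :=
  ⨆ ε ∈ Set.Ioi (0 : ℝ), ⨆ δ ∈ Set.Ioi (0 : ℝ),
  ⨆ (s : ℕ → ℕ), ⨆ (_ : StrictMono s),
  ⨆ (ν : ∀ n, Measure (Fin (d (s n)) → X)),
  ⨆ (_ : (∀ n, IsProbabilityMeasure (ν n)) ∧
      LDEconv (fun n => d (s n)) (fun n => σ (s n)) act ρ μ ν),
    Filter.limsup (fun n =>
      (((d (s n) : ℝ)⁻¹ * Real.log (covNum (rho2 ρ) (ν n) ε δ) : ℝ) : EReal)) atTop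

/-- Local weak* convergence `μᵢ →^{lw*} μ`. -/
def LWconv {X : Type*} [TopologicalSpace X] [MeasurableSpace X] (d : ℕ → ℕ)
    (μ : Measure X) (μi : ∀ i, Measure (Fin (d i) → X)) : Prop :=
  ∀ (f : C(X, ℝ)) (δ : ℝ), 0 < δ →
    Tendsto (fun i =>
      prop fun j : Fin (d i) => |(∫ φ, f (φ j) ∂(μi i)) - ∫ x, f x ∂μ| < δ)
      atTop (nhds 1)

/-- Ergodicity of an action with respect to a measure. -/
def ErgodicAction {G X : Type*} [MeasurableSpace X] (act : G → X → X) (μ : Measure X) :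
    Prop :=
  ∀ A : Set X, MeasurableSet A → (∀ g, act g '' A = A) → μ A = 0 ∨ μ A = 1

/-- Weak mixing: ergodicity of the diagonal action on the square. -/
def WeaklyMixingAction {G X : Type*} [MeasurableSpace X] (act : G → X → X)
    (μ : Measure X) : Prop :=
  ErgodicAction (diagAct act) (μ.prod μ)

/-- The homoclinic group of an action on a compact group. -/
def homoclinic {G X : Type*} [TopologicalSpace X] [One X] (act : G → X → X) : Set X :=
  {x | Tendsto (fun g => act g x) cofinite (nhds 1)}

/-- The left-shift action of `G` on `A^G`. -/
def shift (G A : Type*) [Group G] : G → (G → A) → (G → A) :=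
  fun g x h => x (g⁻¹ * h)

/-- The map `Ψ : X → X^G`, `Ψ(x)(g) = g⁻¹ x`. -/
def PsiMap {G X : Type*} [Group G] (act : G → X → X) : X → G → X :=
  fun x g => act g⁻¹ x

/-- The map `φ_x : {1,…,dᵢ} → X^G`, `φ_x(j)(g) = x(σᵢ(g)⁻¹ j)`. -/
def phiX {G X : Type*} {n : ℕ} (σi : G → Equiv.Perm (Fin n)) (x : Fin n → X) :
    Fin n → G → X :=
  fun j g => x ((σi g)⁻¹ j)

/-- The uniform measure on `Fin n`. -/
noncomputable def unif (n : ℕ) : Measure (Fin n) := (n : ℝ≥0∞)⁻¹ • Measure.count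

lemma unif_isProb {n : ℕ} (hn : 0 < n) : IsProbabilityMeasure (unif n) := by
  constructor
  have : (Measure.count : Measure (Fin n)) Set.univ = n := by
    simp [Measure.count_univ]
  simp only [unif, Measure.smul_apply, this, smul_eq_mul]
  exact ENNReal.inv_mul_cancel (by exact_mod_cast hn.ne') (by simp)

/-- Pushforward of a probability measure along a measurable map, as a probability measure. -/
noncomputable def pmMap {α β : Type*} [MeasurableSpace α] [MeasurableSpace β]
    (μ : Measure α) (hμ : IsProbabilityMeasure μ) {f : α → β} (hf : Measurable f) :
    ProbabilityMeasure β :=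
  ⟨μ.map f, by haveI := hμ; exact Measure.isProbabilityMeasure_map hf.aemeasurable⟩

lemma measurable_of_fin {β : Type*} [MeasurableSpace β] {n : ℕ} (f : Fin n → β) :
    Measurable f := measurable_from_top

lemma measurable_phiX_coord {G X : Type*} [MeasurableSpace X] {n : ℕ}
    (σi : G → Equiv.Perm (Fin n)) (j : Fin n) :
    Measurable (fun x : Fin n → X => (fun g => x ((σi g)⁻¹ j) : G → X)) :=
  measurable_pi_lambda _ fun _ => measurable_pi_apply _

/-- The empirical distribution of `φ : Fin n → Z`, a probability measure on `Z` (`n > 0`). -/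
noncomputable def empDist {Z : Type*} [MeasurableSpace Z] {n : ℕ} (hn : 0 < n)
    (φ : Fin n → Z) : ProbabilityMeasure Z :=
  pmMap (unif n) (unif_isProb hn) (measurable_of_fin φ)

/-- Convolution of measures on a group. -/
noncomputable def mconv {X : Type*} [MeasurableSpace X] [Mul X] (μ ν : Measure X) :
    Measure X :=
  Measure.map (fun p : X × X => p.1 * p.2) (μ.prod ν)

/-- Convolution of probability measures on a compact metrizable group. -/
noncomputable def pconv {X : Type*} [TopologicalSpace X] [MeasurableSpace X] [BorelSpace X]
    [SecondCountableTopology X] [Group X] [IsTopologicalGroup X]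
    (μ ν : ProbabilityMeasure X) : ProbabilityMeasure X :=
  ⟨mconv (μ : Measure X) (ν : Measure X), by
    have hmul : Measurable fun p : X × X => p.1 * p.2 := continuous_mul.measurable
    exact Measure.isProbabilityMeasure_map hmul.aemeasurable⟩


/-- The diagonal product action of `G` on `X × Y`. -/
def prodAct {G X Y : Type*} (actX : G → X → X) (actY : G → Y → Y) : G → X × Y → X × Y :=
  fun g p => (actX g p.1, actY g p.2)

end SoficPaper

open SoficPaper

/-- A measurable `ℝ≥0∞`-valued function whose sublevel sets all have measure `0` or `1`
is a.e. constant. -/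
lemma wm_ae_const_of_level {X : Type*} [MeasurableSpace X]
    (m : Measure X) [IsProbabilityMeasure m]
    (f : X → ℝ≥0∞) (hf : Measurable f)
    (hlev : ∀ t : ℝ≥0∞, m {x | f x ≤ t} = 0 ∨ m {x | f x ≤ t} = 1) :
    ∃ c, f =ᵐ[m] fun _ => c := by
  set S := {t : ℝ≥0∞ | m {x | f x ≤ t} = 1} with hS
  have hStop : (⊤ : ℝ≥0∞) ∈ S := by
    have h1 : {x | f x ≤ (⊤:ℝ≥0∞)} = Set.univ := by ext x; simp
    simp only [S, Set.mem_setOf_eq, h1, measure_univ]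
  set c := sInf S with hc
  have hle : ∀ t, c < t → m {x | f x ≤ t} = 1 := by
    intro t ht
    obtain ⟨s, hsS, hst⟩ := sInf_lt_iff.1 ht
    have hsub : {x | f x ≤ s} ⊆ {x | f x ≤ t} := fun x hx => le_trans hx hst.le
    have h1 : (1 : ℝ≥0∞) ≤ m {x | f x ≤ t} := hsS ▸ measure_mono hsub
    exact le_antisymm prob_le_one h1
  have hlt : ∀ t, t < c → m {x | f x ≤ t} = 0 := by
    intro t ht
    rcases hlev t with h | h
    · exact h
    · have : c ≤ t := csInf_le (OrderBot.bddBelow _) (show t ∈ S from h)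
      exact absurd this (not_le.2 ht)
  have hupper : m {x | c < f x} = 0 := by
    rcases eq_or_ne c ⊤ with hctop | hctop
    · have : {x | c < f x} = ∅ := by
        ext x; simp [hctop]
      simp [this]
    · obtain ⟨u, -, hu_mem, hu_tend⟩ :=
        exists_seq_strictAnti_tendsto' (hctop.lt_top)
      have hsub : {x | c < f x} ⊆ ⋃ n, {x | f x ≤ u n}ᶜ := by
        intro x hx
        obtain ⟨n, hn⟩ := (hu_tend.eventually_lt_const hx).exists
        exact Set.mem_iUnion.2 ⟨n, by simpa using not_le.2 hn⟩
      refine measure_mono_null hsub (measure_iUnion_null fun n => ?_)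
      rw [measure_compl (measurableSet_le hf measurable_const) (measure_ne_top _ _),
        hle (u n) (hu_mem n).1]
      simp
  have hlower : m {x | f x < c} = 0 := by
    rcases eq_or_ne c 0 with hc0 | hc0
    · have : {x | f x < c} = ∅ := by
        ext x; simp [hc0]
      simp [this]
    · obtain ⟨u, -, hu_mem, hu_tend⟩ :=
        exists_seq_strictMono_tendsto' (zero_lt_iff.mpr hc0)
      have hsub : {x | f x < c} ⊆ ⋃ n, {x | f x ≤ u n} := by
        intro x hx
        obtain ⟨n, hn⟩ := (hu_tend.eventually_const_lt hx).exists
        exact Set.mem_iUnion.2 ⟨n, hn.le⟩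
      exact measure_mono_null hsub (measure_iUnion_null fun n => hlt _ (hu_mem n).2)
  refine ⟨c, ?_⟩
  rw [Filter.EventuallyEq, ae_iff]
  refine measure_mono_null (fun x hx => ?_) (measure_union_null hupper hlower)
  rcases lt_or_gt_of_ne (hx : f x ≠ c) with h | h
  exacts [Or.inr h, Or.inl h]

/-- An ergodic action of a countable group on a compact metrizable group
by continuous automorphisms (with the Haar measure) is weakly mixing. -/
theorem weaklyMixing_of_ergodic {G X : Type*} [Group G] [Countable G]
    [TopologicalSpace X] [CompactSpace X] [TopologicalSpace.MetrizableSpace X]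
    [Group X] [IsTopologicalGroup X] [MeasurableSpace X] [BorelSpace X]
    (act : G → X → X) (hact : IsActionByAutomorphisms G X act)
    (m : MeasureTheory.Measure X) (hHaar : m.IsHaarMeasure)
    (hmProb : MeasureTheory.IsProbabilityMeasure m)
    (herg : ErgodicAction act m) :
    WeaklyMixingAction act m := by
  haveI := hHaar
  haveI := hmProb
  intro A hAmeas hAinv
  set ν : Measure (X × X) := m.prod m with hν
  -- Basic action facts
  have hinv1 : ∀ (g : G) (x : X), act g (act g⁻¹ x) = x := by
    intro g x; rw [← hact.mul, mul_inv_cancel, hact.one]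
  have hinv2 : ∀ (g : G) (x : X), act g⁻¹ (act g x) = x := by
    intro g x; rw [← hact.mul, inv_mul_cancel, hact.one]
  -- each act g is measure preserving
  have mp_act : ∀ g : G, MeasurePreserving (act g) m m := by
    intro g
    exact MonoidHom.measurePreserving
      (f := MonoidHom.mk' (act g) (fun x y => hact.map_mul g x y))
      (hact.continuous g) (fun x => ⟨act g⁻¹ x, hinv1 g x⟩) rfl
  -- uniqueness of the Haar probability measure
  have huniq : ∀ μ' : Measure X, μ'.IsMulLeftInvariant → IsProbabilityMeasure μ' → μ' = m := by
    intro μ' h1 h2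
    haveI := h1; haveI := h2
    have h := Measure.isMulInvariant_eq_smul_of_compactSpace μ' m
    have hu := congrArg (fun ρ : Measure X => ρ Set.univ) h
    simp only [measure_univ, Measure.smul_apply, smul_eq_mul, ENNReal.smul_def] at hu
    rw [mul_one] at hu
    have hc1 : Measure.haarScalarFactor μ' m = 1 := by exact_mod_cast hu.symm
    rw [h, hc1, one_smul]
  -- right invariance of m
  have hright : ∀ t : X, Measure.map (· * t) m = m := by
    intro t
    haveI : IsProbabilityMeasure (Measure.map (· * t) m) :=
      Measure.isProbabilityMeasure_map (measurable_mul_const t).aemeasurable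
    exact huniq _ inferInstance inferInstance
  have mp_right : ∀ t : X, MeasurePreserving (· * t) m m :=
    fun t => ⟨measurable_mul_const t, hright t⟩
  -- diagonal action is measure preserving on ν
  have mpD : ∀ g : G, MeasurePreserving (diagAct act g) ν ν :=
    fun g => (mp_act g).prod (mp_act g)
  -- right translation in the second coordinate is measure preserving on ν
  have mpR : ∀ t : X, MeasurePreserving (fun p : X × X => (p.1, p.2 * t)) ν ν :=
    fun t => (MeasurePreserving.id m).prod (mp_right t)
  -- invariance of A as preimages
  have hDinj : ∀ g : G, Function.Injective (diagAct act g) := by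
    intro g
    apply Function.LeftInverse.injective (g := diagAct act g⁻¹)
    intro p
    simp [diagAct, hinv2]
  have hpre : ∀ g : G, diagAct act g ⁻¹' A = A := by
    intro g
    ext p
    constructor
    · intro hp
      rw [← hAinv g] at hp
      obtain ⟨q, hq, hqp⟩ := hp
      rwa [← hDinj g hqp]
    · intro hp
      have : diagAct act g p ∈ diagAct act g '' A := ⟨p, hp, rfl⟩
      rwa [hAinv g] at this
  have hkey : ∀ (g : G) (p : X × X), p ∈ A ↔ diagAct act g p ∈ A := by
    intro g p
    conv_lhs => rw [← hpre g]
    exact Iff.rfl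
  -- ergodicity: invariant functions are a.e. constant
  have hconst : ∀ f : X → ℝ≥0∞, Measurable f → (∀ g x, f (act g x) = f x) →
      ∃ c, f =ᵐ[m] fun _ => c := by
    intro f hf hfinv
    apply wm_ae_const_of_level m f hf
    intro t
    apply herg _ (measurableSet_le hf measurable_const)
    intro g
    ext x
    simp only [Set.mem_image, Set.mem_setOf_eq]
    constructor
    · rintro ⟨y, hy, rfl⟩; rwa [hfinv]
    · intro hx
      exact ⟨act g⁻¹ x, by rwa [hfinv g⁻¹ x], hinv1 g x⟩
  -- the fiber measure function h
  have hsecmeas : ∀ x : X, MeasurableSet (Prod.mk x ⁻¹' A) :=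
    fun x => measurable_prodMk_left hAmeas
  set h : X → ℝ≥0∞ := fun x => m (Prod.mk x ⁻¹' A) with hh
  have hmeas : Measurable h := measurable_measure_prodMk_left hAmeas
  have hinvh : ∀ (g : G) (x : X), h (act g x) = h x := by
    intro g x
    have hset : Prod.mk (act g x) ⁻¹' A = act g⁻¹ ⁻¹' (Prod.mk x ⁻¹' A) := by
      ext y
      simp only [Set.mem_preimage]
      rw [hkey g⁻¹ (act g x, y)]
      simp [diagAct, hinv2]
    show m (Prod.mk (act g x) ⁻¹' A) = m (Prod.mk x ⁻¹' A)
    rw [hset, (mp_act g⁻¹).measure_preimage (hsecmeas x).nullMeasurableSet]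
  set α : ℝ≥0∞ := ν A with hα
  have hα1 : α ≤ 1 := prob_le_one
  obtain ⟨ch, hch⟩ := hconst h hmeas hinvh
  have hνA : ν A = ∫⁻ x, h x ∂m := Measure.prod_apply hAmeas
  have hch_eq : ch = α := by
    have : ν A = ch := by
      rw [hνA, lintegral_congr_ae hch, lintegral_const, measure_univ, mul_one]
    rw [← this]
  have hhae : h =ᵐ[m] fun _ => α := hch_eq ▸ hch
  -- the correlation function F
  set R : X → X × X → X × X := fun t p => (p.1, p.2 * t) with hR
  have hRmeas : ∀ t, Measurable (R t) :=
    fun t => measurable_fst.prodMk (measurable_snd.mul_const t)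
  set E : Set (X × (X × X)) := {q | q.2 ∈ A ∧ (q.2.1, q.2.2 * q.1) ∈ A} with hE
  have hEmeas : MeasurableSet E := by
    apply MeasurableSet.inter
    · exact measurable_snd hAmeas
    · exact (Measurable.prodMk measurable_snd.fst (measurable_snd.snd.mul measurable_fst)) hAmeas
  have hEsec : ∀ t : X, Prod.mk t ⁻¹' E = A ∩ R t ⁻¹' A := by
    intro t; ext p; simp [hE, hR, Set.mem_inter_iff]
  set F : X → ℝ≥0∞ := fun t => ν (A ∩ R t ⁻¹' A) with hF
  have hFmeas : Measurable F := by
    have h0 : F = fun t => ν (Prod.mk t ⁻¹' E) := by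
      funext t
      exact congrArg ν (hEsec t).symm
    rw [h0]
    exact measurable_measure_prodMk_left hEmeas
  have hFinv : ∀ (g : G) (t : X), F (act g t) = F t := by
    intro g t
    have hcomm : R (act g t) ∘ diagAct act g = diagAct act g ∘ R t := by
      funext p
      simp [hR, diagAct, hact.map_mul]
    have hmeasS : MeasurableSet (A ∩ R (act g t) ⁻¹' A) := hAmeas.inter (hRmeas _ hAmeas)
    have h1 : F (act g t) = ν (diagAct act g ⁻¹' (A ∩ R (act g t) ⁻¹' A)) :=
      ((mpD g).measure_preimage hmeasS.nullMeasurableSet).symm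
    rw [h1, Set.preimage_inter, hpre g, ← Set.preimage_comp, hcomm, Set.preimage_comp,
      hpre g]
  obtain ⟨cF, hcF⟩ := hconst F hFmeas hFinv
  have hFle : ∀ t, F t ≤ α := fun t => measure_mono Set.inter_subset_left
  -- the integral of F equals α²
  have hint : ∫⁻ t, F t ∂m = α * α := by
    have h1 : ∫⁻ t, F t ∂m = (m.prod ν) E := by
      rw [Measure.prod_apply hEmeas]
      apply lintegral_congr
      intro t
      rw [hEsec t]
    have h2 : (m.prod ν) E = ∫⁻ p, A.indicator (fun p : X × X => h p.1) p ∂ν := by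
      rw [Measure.prod_apply_symm hEmeas]
      apply lintegral_congr
      intro p
      by_cases hp : p ∈ A
      · rw [Set.indicator_of_mem hp]
        have hs : ((fun t => (t, p)) ⁻¹' E) = (fun t => p.2 * t) ⁻¹' (Prod.mk p.1 ⁻¹' A) := by
          ext t; simp [hE, hp]
        rw [hs, measure_preimage_mul]
      · rw [Set.indicator_of_notMem hp]
        have hs : ((fun t => (t, p)) ⁻¹' E) = ∅ := by
          ext t; simp [hE, hp]
        simp [hs]
    have hae2 : (A.indicator (fun p : X × X => h p.1)) =ᵐ[ν]
        (A.indicator (fun _ : X × X => α)) := by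
      have hnull : m {x | h x ≠ α} = 0 := by
        have := hhae
        rw [Filter.EventuallyEq, ae_iff] at this
        exact this
      have hν0 : ν {p : X × X | h p.1 ≠ α} = 0 := by
        have hs : {p : X × X | h p.1 ≠ α} = {x | h x ≠ α} ×ˢ Set.univ := by
          ext p; simp [Set.mem_prod]
        rw [hs, hν, Measure.prod_prod, hnull, zero_mul]
      rw [Filter.EventuallyEq, ae_iff]
      refine measure_mono_null ?_ hν0
      intro p hp
      simp only [Set.mem_setOf_eq] at hp ⊢
      intro hcontra
      apply hp
      by_cases hpA : p ∈ A
      · rw [Set.indicator_of_mem hpA, Set.indicator_of_mem hpA, hcontra]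
      · rw [Set.indicator_of_notMem hpA, Set.indicator_of_notMem hpA]
    have h3 : ∫⁻ p, A.indicator (fun p : X × X => h p.1) p ∂ν = α * α := by
      rw [lintegral_congr_ae hae2, lintegral_indicator hAmeas _, setLIntegral_const,
        ← hα, mul_comm]
    rw [h1, h2, h3]
  have hcF_eq : cF = α * α := by
    rw [← hint, lintegral_congr_ae hcF, lintegral_const, measure_univ, mul_one]
  -- the ε-approximation argument
  have hmain : ∀ ε : ℝ≥0∞, ε ≠ 0 → α ≤ α * α + (ε + ε) := by
    intro ε hε
    obtain ⟨K, hKA, hKcomp, hKlt⟩ := hAmeas.exists_isCompact_lt_add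
      (measure_ne_top ν A) hε
    obtain ⟨U, hAU, hUopen, hUlt⟩ := A.exists_isOpen_lt_add (measure_ne_top ν A) hε
    have hcont : Continuous (fun q : X × (X × X) => R q.1 q.2) := by
      exact (continuous_snd.fst).prodMk ((continuous_snd.snd).mul continuous_fst)
    have hn : IsOpen ((fun q : X × (X × X) => R q.1 q.2) ⁻¹' U) :=
      hUopen.preimage hcont
    have hsub : ({1} : Set X) ×ˢ K ⊆ (fun q : X × (X × X) => R q.1 q.2) ⁻¹' U := by
      rintro ⟨t, p⟩ ⟨ht, hp⟩
      simp only [Set.mem_singleton_iff] at ht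
      subst ht
      have : R 1 p = p := by simp [hR]
      simp only [Set.mem_preimage]
      rw [this]
      exact hAU (hKA hp)
    obtain ⟨u, v, hu_open, hv_open, h1u, hKv, huv⟩ :=
      generalized_tube_lemma isCompact_singleton hKcomp hn hsub
    have h1u' : (1 : X) ∈ u := h1u rfl
    -- pick t in u with F t = cF
    have hmu : 0 < m u := hu_open.measure_pos m ⟨1, h1u'⟩
    have hN : m {t | F t ≠ cF} = 0 := by
      have := hcF
      rw [Filter.EventuallyEq, ae_iff] at this
      exact this
    have : ∃ t ∈ u, F t = cF := by
      by_contra hcon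
      push_neg at hcon
      have : u ⊆ {t | F t ≠ cF} := fun t ht => hcon t ht
      exact absurd (measure_mono_null this hN) hmu.ne'
    obtain ⟨t, htu, htF⟩ := this
    -- the estimate
    have hUA : ν (U \ A) ≤ ε := by
      rw [measure_diff hAU hAmeas.nullMeasurableSet (measure_ne_top ν A)]
      exact tsub_le_iff_right.2 (by rw [add_comm]; exact hUlt.le)
    have hKU : ∀ p ∈ K, R t p ∈ U := by
      intro p hp
      exact huv (Set.mk_mem_prod htu (hKv hp))
    have hdiff : K \ R t ⁻¹' A ⊆ R t ⁻¹' (U \ A) := by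
      rintro p ⟨hpK, hpA⟩
      exact ⟨hKU p hpK, hpA⟩
    have hstep1 : ν K ≤ F t + ε := by
      calc ν K ≤ ν (K ∩ R t ⁻¹' A) + ν (K \ R t ⁻¹' A) :=
            measure_le_inter_add_diff ν K _
        _ ≤ F t + ε := by
            apply add_le_add
            · exact measure_mono (Set.inter_subset_inter hKA (le_refl _))
            · calc ν (K \ R t ⁻¹' A) ≤ ν (R t ⁻¹' (U \ A)) := measure_mono hdiff
                _ = ν (U \ A) := (mpR t).measure_preimage
                    ((hUopen.measurableSet.diff hAmeas).nullMeasurableSet)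
                _ ≤ ε := hUA
    calc α = ν A := rfl
      _ ≤ ν K + ε := hKlt.le
      _ ≤ (F t + ε) + ε := add_le_add_left hstep1 ε
      _ = α * α + (ε + ε) := by rw [htF, hcF_eq, add_assoc]
  -- conclude α = α * α
  have hle : α ≤ α * α := by
    apply ENNReal.le_of_forall_pos_le_add
    intro ε hε _
    have hε2 : ((ε : ℝ≥0∞) / 2) ≠ 0 := by
      simp [ENNReal.div_eq_zero_iff]
      exact_mod_cast hε.ne'
    calc α ≤ α * α + ((ε : ℝ≥0∞) / 2 + (ε : ℝ≥0∞) / 2) := hmain _ hε2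
      _ = α * α + ε := by rw [ENNReal.add_halves]
  have hge : α * α ≤ α := by
    calc α * α ≤ 1 * α := mul_le_mul_left hα1 α
      _ = α := one_mul α
  have hαα : α = α * α := le_antisymm hle hge
  rcases eq_or_ne α 0 with h0 | h0
  · exact Or.inl h0
  · right
    have hαtop : α ≠ ⊤ := (lt_of_le_of_lt hα1 ENNReal.one_lt_top).ne
    have : α * 1 = α * α := by rw [mul_one]; exact hαα
    exact ((ENNReal.mul_right_inj h0 hαtop).1 this).symm
end

section
/- Let X be a compact metrizable group with Haar probability measure m_X. For every open neighborhood O of m_X in the space Prob(X) of Borel probability measures on X with the weak* topology, there is an open neighborhood V of m_X in Prob(X) such that μ * ν ∈ O for all μ ∈ V and all ν ∈ Prob(X). -/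
open MeasureTheory Filter Topology
open scoped ENNReal NNReal BigOperators Classical

open SoficPaper

open MeasureTheory Filter Topology BoundedContinuousFunction in
private lemma SoficAux.haar_right_invariant {X : Type*} [TopologicalSpace X] [CompactSpace X]
    [TopologicalSpace.MetrizableSpace X] [Group X] [IsTopologicalGroup X]
    [MeasurableSpace X] [BorelSpace X] (m : ProbabilityMeasure X)
    (hHaar : (m : Measure X).IsHaarMeasure) :
    (m : Measure X).IsMulRightInvariant := by
  haveI := hHaar
  constructor
  intro g
  haveI : IsProbabilityMeasure ((m : Measure X).map (· * g)) :=
    Measure.isProbabilityMeasure_map (measurable_mul_const g).aemeasurable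
  haveI : ((m : Measure X).map (· * g)).IsOpenPosMeasure :=
    (continuous_mul_right g).isOpenPosMeasure_map (Homeomorph.mulRight g).surjective
  haveI : ((m : Measure X).map (· * g)).IsHaarMeasure :=
    { toIsFiniteMeasureOnCompacts := inferInstance
      toIsMulLeftInvariant := inferInstance
      toIsOpenPosMeasure := inferInstance }
  exact Measure.isHaarMeasure_eq_of_isProbabilityMeasure _ _

open MeasureTheory Filter Topology BoundedContinuousFunction in
private lemma SoficAux.tendsto_pconv {X : Type*} [TopologicalSpace X] [CompactSpace X]
    [TopologicalSpace.MetrizableSpace X] [Group X] [IsTopologicalGroup X]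
    [MeasurableSpace X] [BorelSpace X] (m : ProbabilityMeasure X)
    (hHaar : (m : Measure X).IsHaarMeasure)
    (μ ν : ℕ → ProbabilityMeasure X) (hμ : Tendsto μ atTop (nhds m)) :
    Tendsto (fun n => pconv (μ n) (ν n)) atTop (nhds m) := by
  haveI := hHaar
  haveI : (m : Measure X).IsMulRightInvariant := SoficAux.haar_right_invariant m hHaar
  rw [ProbabilityMeasure.tendsto_iff_forall_integral_tendsto]
  intro f
  set c : ℝ := ∫ x, f x ∂(m : Measure X) with hc
  -- the curried translate family
  let F : C(X, C(X, ℝ)) :=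
    ContinuousMap.curry ⟨fun p : X × X => f (p.2 * p.1),
      f.continuous.comp (continuous_snd.mul continuous_fst)⟩
  have hFapp : ∀ y x, F y x = f (x * y) := fun y x => rfl
  let fy : X → (X →ᵇ ℝ) := fun y => f.compContinuous ⟨fun x => x * y, continuous_mul_right y⟩
  have hfy : ∀ y x, fy y x = f (x * y) := fun y x => rfl
  -- integral over the convolution
  have hI : ∀ n, ∫ x, f x ∂(pconv (μ n) (ν n) : Measure X)
      = ∫ y, (∫ x, f (x * y) ∂(μ n : Measure X)) ∂(ν n : Measure X) := by
    intro n
    have hmul : Measurable fun p : X × X => p.1 * p.2 := measurable_mul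
    have h1 : (pconv (μ n) (ν n) : Measure X)
        = Measure.map (fun p : X × X => p.1 * p.2)
            ((μ n : Measure X).prod (ν n : Measure X)) := rfl
    rw [h1, integral_map hmul.aemeasurable f.continuous.aestronglyMeasurable]
    exact integral_prod_symm (fun p : X × X => f (p.1 * p.2))
      ((f.compContinuous ⟨fun p : X × X => p.1 * p.2, continuous_mul⟩).integrable _)
  -- invariance
  have hinv : ∀ y : X, ∫ x, f (x * y) ∂(m : Measure X) = c :=
    fun y => integral_mul_right_eq_self (fun x => f x) y
  rw [Metric.tendsto_atTop]
  intro ε hε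
  set ε3 : ℝ := ε / 4 with hε3
  have hε3pos : 0 < ε3 := by positivity
  -- finite cover
  obtain ⟨t, ht⟩ := isCompact_univ.elim_finite_subcover
      (fun y : X => {y' | dist (F y') (F y) < ε3})
      (fun y => isOpen_lt (Continuous.dist F.continuous continuous_const) continuous_const)
      (fun y _ => Set.mem_iUnion.mpr ⟨y, by simpa using hε3pos⟩)
  -- pointwise convergence at cover points, eventually
  have hev : ∀ᶠ n in atTop, ∀ y0 ∈ t, |(∫ x, f (x * y0) ∂(μ n : Measure X)) - c| < ε3 := by
    rw [Filter.eventually_all_finset t]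
    intro y0 _
    have h1 : Tendsto (fun n => ∫ x, (fy y0) x ∂(μ n : Measure X)) atTop
        (nhds (∫ x, (fy y0) x ∂(m : Measure X))) :=
      ProbabilityMeasure.tendsto_iff_forall_integral_tendsto.mp hμ (fy y0)
    have h2 : (∫ x, (fy y0) x ∂(m : Measure X)) = c := hinv y0
    rw [h2] at h1
    filter_upwards [h1 (Metric.ball_mem_nhds c hε3pos)] with n hn
    simpa [Real.dist_eq, hfy] using hn
  -- global uniform estimate
  have hglob : ∀ᶠ n in atTop, ∀ y : X,
      |(∫ x, f (x * y) ∂(μ n : Measure X)) - c| ≤ 2 * ε3 := by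
    filter_upwards [hev] with n hn y
    obtain ⟨y0, hy0t, hy0⟩ : ∃ y0 ∈ t, dist (F y) (F y0) < ε3 := by
      have := ht (Set.mem_univ y)
      simpa using this
    have hdiff : |(∫ x, f (x * y) ∂(μ n : Measure X))
        - (∫ x, f (x * y0) ∂(μ n : Measure X))| ≤ ε3 := by
      have hsub : (∫ x, f (x * y) ∂(μ n : Measure X))
          - (∫ x, f (x * y0) ∂(μ n : Measure X))
          = ∫ x, (f (x * y) - f (x * y0)) ∂(μ n : Measure X) :=
        (integral_sub ((fy y).integrable _) ((fy y0).integrable _)).symm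
      rw [hsub]
      have hb : ∀ x, ‖f (x * y) - f (x * y0)‖ ≤ ε3 := by
        intro x
        have h3 : dist (F y x) (F y0 x) ≤ dist (F y) (F y0) :=
          ContinuousMap.dist_apply_le_dist x
        rw [hFapp, hFapp, Real.dist_eq] at h3
        exact h3.trans hy0.le
      calc ‖∫ x, (f (x * y) - f (x * y0)) ∂(μ n : Measure X)‖
          ≤ ε3 * ((μ n : Measure X) Set.univ).toReal :=
            norm_integral_le_of_norm_le_const (MeasureTheory.ae_of_all _ hb)
        _ = ε3 := by simp
    calc |(∫ x, f (x * y) ∂(μ n : Measure X)) - c|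
        ≤ |(∫ x, f (x * y) ∂(μ n : Measure X)) - (∫ x, f (x * y0) ∂(μ n : Measure X))|
          + |(∫ x, f (x * y0) ∂(μ n : Measure X)) - c| := abs_sub_le _ _ _
      _ ≤ ε3 + ε3 := add_le_add hdiff (hn y0 hy0t).le
      _ = 2 * ε3 := by ring
  -- conclude
  have hfin : ∀ᶠ n in atTop,
      dist (∫ x, f x ∂(pconv (μ n) (ν n) : Measure X)) c < ε := by
    filter_upwards [hglob] with n hn
    have hgcont : Continuous fun y : X => ∫ x, f (x * y) ∂(μ n : Measure X) := by
      have hL : LipschitzWith 1 (fun h : C(X, ℝ) => ∫ x, h x ∂(μ n : Measure X)) := by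
        apply LipschitzWith.of_dist_le_mul
        intro h h'
        have hint : ∀ g : C(X, ℝ), Integrable g (μ n : Measure X) := fun g =>
          ⟨g.continuous.aestronglyMeasurable,
            MeasureTheory.HasFiniteIntegral.of_bounded
              (MeasureTheory.ae_of_all _ g.norm_coe_le_norm)⟩
        have hsub : (∫ x, h x ∂(μ n : Measure X)) - (∫ x, h' x ∂(μ n : Measure X))
            = ∫ x, (h x - h' x) ∂(μ n : Measure X) :=
          (integral_sub (hint h) (hint h')).symm
        rw [Real.dist_eq, hsub]
        calc ‖∫ x, (h x - h' x) ∂(μ n : Measure X)‖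
            ≤ dist h h' * ((μ n : Measure X) Set.univ).toReal := by
              apply norm_integral_le_of_norm_le_const
              apply MeasureTheory.ae_of_all
              intro x
              rw [show ‖h x - h' x‖ = dist (h x) (h' x) from (Real.dist_eq _ _).symm]
              exact ContinuousMap.dist_apply_le_dist x
          _ = 1 * dist h h' := by simp [mul_comm]
      exact hL.continuous.comp F.continuous
    have hgint : Integrable (fun y : X => ∫ x, f (x * y) ∂(μ n : Measure X))
        (ν n : Measure X) := by
      refine ⟨hgcont.aestronglyMeasurable, MeasureTheory.HasFiniteIntegral.of_bounded
        (C := ‖f‖) (MeasureTheory.ae_of_all _ fun y => ?_)⟩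
      calc ‖∫ x, f (x * y) ∂(μ n : Measure X)‖
          ≤ ‖f‖ * ((μ n : Measure X) Set.univ).toReal :=
            norm_integral_le_of_norm_le_const
              (MeasureTheory.ae_of_all _ fun x => f.norm_coe_le_norm _)
        _ = ‖f‖ := by simp
    have heq : (∫ x, f x ∂(pconv (μ n) (ν n) : Measure X)) - c
        = ∫ y, ((∫ x, f (x * y) ∂(μ n : Measure X)) - c) ∂(ν n : Measure X) := by
      rw [integral_sub hgint (integrable_const c), integral_const, hI n]
      simp
    rw [Real.dist_eq, heq]
    calc ‖∫ y, ((∫ x, f (x * y) ∂(μ n : Measure X)) - c) ∂(ν n : Measure X)‖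
        ≤ (2 * ε3) * ((ν n : Measure X) Set.univ).toReal :=
          norm_integral_le_of_norm_le_const (MeasureTheory.ae_of_all _ fun y => hn y)
      _ = 2 * ε3 := by simp
      _ < ε := by rw [hε3]; linarith
  obtain ⟨N, hN⟩ := eventually_atTop.mp hfin
  exact ⟨N, fun n hn => hN n hn⟩


/-- For every weak* neighborhood `O` of the Haar measure on a compact
metrizable group there is a weak* neighborhood `V` of the Haar measure with
`μ * ν ∈ O` for all `μ ∈ V` and all probability measures `ν`. -/
theorem exists_nhd_convolution_mem {X : Type*}
    [TopologicalSpace X] [CompactSpace X] [TopologicalSpace.MetrizableSpace X]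
    [Group X] [IsTopologicalGroup X] [MeasurableSpace X] [BorelSpace X]
    (m : MeasureTheory.ProbabilityMeasure X)
    (hHaar : (m : MeasureTheory.Measure X).IsHaarMeasure) :
    ∀ O : Set (MeasureTheory.ProbabilityMeasure X), IsOpen O → m ∈ O →
      ∃ V : Set (MeasureTheory.ProbabilityMeasure X), IsOpen V ∧ m ∈ V ∧
        ∀ μ ∈ V, ∀ ν : MeasureTheory.ProbabilityMeasure X, pconv μ ν ∈ O  := by
  intro O hO hmO
  by_contra hcon
  push_neg at hcon
  obtain ⟨U, hU⟩ := (nhds m).exists_antitone_basis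
  have key : ∀ n : ℕ, ∃ μ : MeasureTheory.ProbabilityMeasure X, μ ∈ U n ∧
      ∃ ν : MeasureTheory.ProbabilityMeasure X, pconv μ ν ∉ O := by
    intro n
    obtain ⟨V, hVU, hVo, hmV⟩ := mem_nhds_iff.mp (hU.mem n)
    obtain ⟨μ, hμV, ν, hν⟩ := hcon V hVo hmV
    exact ⟨μ, hVU hμV, ν, hν⟩
  choose μ hμU ν hν using key
  have hμm : Tendsto μ atTop (nhds m) := hU.tendsto hμU
  have hconv : Tendsto (fun n => pconv (μ n) (ν n)) atTop (nhds m) :=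
    SoficAux.tendsto_pconv m hHaar μ ν hμm
  obtain ⟨n, hn⟩ := (hconv.eventually (hO.mem_nhds hmO)).exists
  exact hν n hn
end

section
/- Let G be a countable discrete sofic group with a fixed sofic approximation σ_i : G → Sym({1,…,d_i}), let X be a compact metrizable space with a continuous G-action by homeomorphisms, let ρ be a dynamically generating continuous pseudometric on X, let μ be a G-invariant Borel probability measure on X, and let Ψ : X → X^G be Ψ(x)(g) = g^{-1}·x. Then for every weak* open neighborhood O of Ψ_*μ in Prob(X^G), there exist a finite F ⊆ G, a finite L ⊆ C(X), a δ > 0 and an I ∈ ℕ such that for all i ≥ I and all x ∈ Map_μ(ρ,F,L,δ,σ_i), one has (φ_x)_*(u_{d_i}) ∈ O. -/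
open MeasureTheory Filter Topology
open scoped ENNReal NNReal BigOperators Classical

namespace SoficPaper

section PropLemmas

lemma prop_nonneg {n : ℕ} (P : Fin n → Prop) : 0 ≤ prop P := by
  unfold prop; positivity

lemma prop_le_one {n : ℕ} (P : Fin n → Prop) : prop P ≤ 1 := by
  unfold prop
  rcases Nat.eq_zero_or_pos n with h | h
  · simp [h]
  · rw [div_le_one (by exact_mod_cast h)]
    exact_mod_cast (Finset.card_filter_le Finset.univ P).trans (by simp)

lemma prop_congr {n : ℕ} {P Q : Fin n → Prop} (h : ∀ j, P j ↔ Q j) : prop P = prop Q := by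
  unfold prop
  have h1 : Finset.univ.filter P = Finset.univ.filter Q :=
    Finset.filter_congr (fun j _ => by simp only [h j])
  rw [h1]

lemma prop_true {n : ℕ} (hn : 0 < n) {P : Fin n → Prop} (h : ∀ j, P j) : prop P = 1 := by
  have h1 : Finset.univ.filter P = Finset.univ := Finset.filter_true_of_mem (fun j _ => h j)
  unfold prop
  rw [h1, Finset.card_univ, Fintype.card_fin]
  exact div_self (by exact_mod_cast hn.ne')

lemma prop_not {n : ℕ} (hn : 0 < n) (P : Fin n → Prop) :
    prop (fun j => ¬ P j) = 1 - prop P := by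
  have hcard := Finset.card_filter_add_card_filter_not
    (s := (Finset.univ : Finset (Fin n))) (p := P)
  rw [Finset.card_univ, Fintype.card_fin] at hcard
  have hn' : (n : ℝ) ≠ 0 := by exact_mod_cast hn.ne'
  unfold prop
  rw [eq_sub_iff_add_eq, ← add_div, add_comm, div_eq_one_iff_eq hn']
  norm_cast
  convert hcard using 4

lemma prop_mono {n : ℕ} {P Q : Fin n → Prop} (h : ∀ j, P j → Q j) : prop P ≤ prop Q := by
  unfold prop
  have hc : (Finset.univ.filter P).card ≤ (Finset.univ.filter Q).card :=
    Finset.card_le_card (Finset.monotone_filter_right _ (fun j _ => h j))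
  gcongr

lemma prop_or_le {n : ℕ} (P Q : Fin n → Prop) :
    prop (fun j => P j ∨ Q j) ≤ prop P + prop Q := by
  unfold prop
  rcases Nat.eq_zero_or_pos n with h | h
  · simp [h]
  have hn' : (0 : ℝ) < n := by exact_mod_cast h
  rw [← add_div, div_le_div_iff_of_pos_right hn', ← Nat.cast_add, Nat.cast_le]
  refine le_trans (Finset.card_le_card ?_) (Finset.card_union_le _ _)
  intro j hj
  simp only [Finset.mem_filter, Finset.mem_univ, true_and, Finset.mem_union] at hj ⊢
  tauto

lemma prop_exists_le {n : ℕ} {α : Type*} (E : Finset α) (B : α → Fin n → Prop) :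
    prop (fun j => ∃ h ∈ E, B h j) ≤ ∑ h ∈ E, prop (B h) := by
  unfold prop
  rw [← Finset.sum_div]
  rcases Nat.eq_zero_or_pos n with h0 | h0
  · simp [h0]
  have hn' : (0 : ℝ) < n := by exact_mod_cast h0
  rw [div_le_div_iff_of_pos_right hn', ← Nat.cast_sum, Nat.cast_le]
  refine le_trans (Finset.card_le_card ?_) Finset.card_biUnion_le
  intro j hj
  simp only [Finset.mem_filter, Finset.mem_univ, true_and] at hj
  obtain ⟨h, hh, hB⟩ := hj
  exact Finset.mem_biUnion.mpr ⟨h, hh, by simp [hB]⟩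

lemma prop_perm {n : ℕ} (π : Equiv.Perm (Fin n)) (P : Fin n → Prop) :
    prop (fun j => P (π j)) = prop P := by
  unfold prop
  congr 2
  refine Finset.card_bij' (fun j _ => π j) (fun j _ => π.symm j) ?_ ?_ ?_ ?_
  · intro j hj
    simp only [Finset.mem_filter, Finset.mem_univ, true_and] at hj ⊢
    exact hj
  · intro j hj
    simp only [Finset.mem_filter, Finset.mem_univ, true_and] at hj ⊢
    simpa using hj
  · intro j _; simp
  · intro j _; simp

lemma one_sub_prop_and {n : ℕ} (hn : 0 < n) (P Q : Fin n → Prop) :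
    1 - prop (fun j => P j ∧ Q j) ≤ (1 - prop P) + (1 - prop Q) := by
  have h1 : prop (fun j => ¬ (P j ∧ Q j)) ≤ prop (fun j => ¬ P j) + prop (fun j => ¬ Q j) := by
    refine le_trans (prop_mono ?_) (prop_or_le _ _)
    intro j; tauto
  rw [prop_not hn, prop_not hn, prop_not hn] at h1
  linarith

lemma prop_sq_le {n : ℕ} (hn : 0 < n) (a : Fin n → ℝ) (ha : ∀ j, 0 ≤ a j) {t η : ℝ}
    (ht : 0 < t) (h : Real.sqrt ((n : ℝ)⁻¹ * ∑ j, a j ^ 2) < η) :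
    prop (fun j => t < a j) ≤ η ^ 2 / t ^ 2 := by
  have hη : 0 < η := lt_of_le_of_lt (Real.sqrt_nonneg _) h
  have hn' : (0 : ℝ) < n := by exact_mod_cast hn
  have hsum : (n : ℝ)⁻¹ * ∑ j, a j ^ 2 < η ^ 2 := (Real.sqrt_lt' hη).mp h
  set S := Finset.univ.filter (fun j => t < a j) with hS
  have h1 : (S.card : ℝ) * t ^ 2 ≤ ∑ j ∈ S, a j ^ 2 := by
    have := Finset.card_nsmul_le_sum S (fun j => a j ^ 2) (t ^ 2) (fun j hj => by
      have hj' := (Finset.mem_filter.mp hj).2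
      have h' : t * t ≤ a j * a j := mul_self_le_mul_self ht.le hj'.le
      show t ^ 2 ≤ a j ^ 2
      nlinarith [h'])
    simpa [nsmul_eq_mul] using this
  have h2 : ∑ j ∈ S, a j ^ 2 ≤ ∑ j, a j ^ 2 :=
    Finset.sum_le_sum_of_subset_of_nonneg (Finset.filter_subset _ _) (fun j _ _ => sq_nonneg _)
  have h3 : ∑ j, a j ^ 2 < n * η ^ 2 := by
    have hident : (n : ℝ) * ((n : ℝ)⁻¹ * ∑ j, a j ^ 2) = ∑ j, a j ^ 2 := by
      field_simp
    nlinarith [mul_lt_mul_of_pos_left hsum hn']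
  unfold prop
  rw [div_le_div_iff₀ hn' (by positivity)]
  nlinarith

lemma avg_abs_le {n : ℕ} (hn : 0 < n) (a : Fin n → ℝ) {ε C : ℝ} (hε : 0 ≤ ε) (hC : 0 ≤ C)
    (hbound : ∀ j, |a j| ≤ C) (hprop : 1 - ε ≤ prop (fun j => |a j| ≤ ε)) :
    |(n : ℝ)⁻¹ * ∑ j, a j| ≤ ε + ε * C := by
  have hn' : (0 : ℝ) < n := by exact_mod_cast hn
  set S := Finset.univ.filter (fun j => |a j| ≤ ε) with hSdef
  have hScard_le : (S.card : ℝ) ≤ n := by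
    exact_mod_cast (Finset.card_filter_le _ _).trans (by simp)
  have hS_ge : (n : ℝ) * (1 - ε) ≤ S.card := by
    have h0 : (1 : ℝ) - ε ≤ (S.card : ℝ) / n := hprop
    calc (n : ℝ) * (1 - ε) ≤ n * ((S.card : ℝ) / n) := by gcongr
    _ = S.card := by field_simp
  have hsd : ((Finset.univ \ S).card : ℝ) = n - S.card := by
    rw [Finset.card_sdiff_of_subset (Finset.filter_subset _ _)]
    rw [Nat.cast_sub (Finset.card_le_card (Finset.filter_subset _ _))]
    simp
    rfl
  have habs : |∑ j, a j| ≤ ∑ j, |a j| := Finset.abs_sum_le_sum_abs _ _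
  have hsplit : ∑ j ∈ Finset.univ \ S, |a j| + ∑ j ∈ S, |a j| = ∑ j, |a j| :=
    Finset.sum_sdiff (Finset.filter_subset _ _)
  have h1 : ∑ j ∈ S, |a j| ≤ (S.card : ℝ) * ε := by
    have := Finset.sum_le_card_nsmul S (fun j => |a j|) ε
      (fun j hj => (Finset.mem_filter.mp hj).2)
    simpa [nsmul_eq_mul] using this
  have h2 : ∑ j ∈ Finset.univ \ S, |a j| ≤ ((Finset.univ \ S).card : ℝ) * C := by
    have := Finset.sum_le_card_nsmul (Finset.univ \ S) (fun j => |a j|) C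
      (fun j _ => hbound j)
    simpa [nsmul_eq_mul] using this
  have hkey : |∑ j, a j| ≤ n * ε + (n * ε) * C := by
    have hsc : ((Finset.univ \ S).card : ℝ) ≤ n * ε := by
      rw [hsd]; nlinarith
    nlinarith
  calc |(n : ℝ)⁻¹ * ∑ j, a j| = (n : ℝ)⁻¹ * |∑ j, a j| := by
        rw [abs_mul, abs_of_nonneg (by positivity)]
  _ ≤ (n : ℝ)⁻¹ * (n * ε + (n * ε) * C) := by gcongr
  _ = ε + ε * C := by field_simp

end PropLemmas

section AuxTransfer

variable {G X : Type*} [Group G] [TopologicalSpace X]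

lemma rho_nonneg {ρ : X → X → ℝ} (hρ : IsCtsPseudoMetric ρ) (x y : X) : 0 ≤ ρ x y := by
  have h1 := hρ.triangle x y x
  have h2 := hρ.refl x
  have h3 := hρ.symm y x
  linarith

lemma unif_cont [CompactSpace X] {act : G → X → X} (hact : IsActionByHomeos G X act)
    {ρ : X → X → ℝ} (hρ : IsCtsPseudoMetric ρ) (hgen : IsDynGenerating act ρ)
    (f : C(X, ℝ)) {ε : ℝ} (hε : 0 < ε) :
    ∃ (E : Finset G) (η : ℝ), 0 < η ∧
      ∀ a b : X, (∀ h ∈ E, ρ (act h a) (act h b) ≤ η) → |f a - f b| < ε := by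
  set K : Set (X × X) := {p | ε ≤ |f p.1 - f p.2|} with hK
  have hKc : IsCompact K := by
    have hcl : IsClosed K := isClosed_le continuous_const
      ((f.continuous.comp continuous_fst).sub (f.continuous.comp continuous_snd)).abs
    exact hcl.isCompact
  set U : G → Set (X × X) := fun h => {p | 0 < ρ (act h p.1) (act h p.2)} with hU
  have hUopen : ∀ h, IsOpen (U h) := fun h => isOpen_lt continuous_const
    (hρ.continuous.comp (((hact.continuous h).comp continuous_fst).prodMk
      ((hact.continuous h).comp continuous_snd)))
  have hcover : K ⊆ ⋃ h, U h := by
    rintro ⟨a, b⟩ hab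
    have hab' : ε ≤ |f a - f b| := hab
    have hne : a ≠ b := by
      rintro rfl
      simp only [sub_self, abs_zero] at hab'
      linarith
    obtain ⟨h, hh⟩ := hgen a b hne
    exact Set.mem_iUnion.mpr ⟨h, hh⟩
  obtain ⟨E, hE⟩ := hKc.elim_finite_subcover U hUopen hcover
  set s : X × X → ℝ := fun p => ∑ h ∈ E, ρ (act h p.1) (act h p.2) with hs
  have hscont : Continuous s := continuous_finset_sum _ (fun h _ =>
    hρ.continuous.comp (((hact.continuous h).comp continuous_fst).prodMk
      ((hact.continuous h).comp continuous_snd)))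
  rcases K.eq_empty_or_nonempty with hKe | hKne
  · refine ⟨E, 1, one_pos, fun a b _ => ?_⟩
    by_contra hcon
    have habK : (a, b) ∈ K := not_lt.mp hcon
    rw [hKe] at habK
    exact habK
  · obtain ⟨p₀, hp₀K, hp₀min⟩ := hKc.exists_isMinOn hKne hscont.continuousOn
    have hc : 0 < s p₀ := by
      have hmem := hE hp₀K
      simp only [Set.mem_iUnion] at hmem
      obtain ⟨h, hhE, hh⟩ := hmem
      have hle : ρ (act h p₀.1) (act h p₀.2) ≤ s p₀ :=
        Finset.single_le_sum (f := fun g => ρ (act g p₀.1) (act g p₀.2))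
          (fun g _ => rho_nonneg hρ _ _) hhE
      exact lt_of_lt_of_le hh hle
    refine ⟨E, s p₀ / (2 * (E.card + 1)), by positivity, fun a b hab => ?_⟩
    by_contra hcon
    have habK : (a, b) ∈ K := not_lt.mp hcon
    have h1 : s (a, b) ≤ (E.card : ℝ) * (s p₀ / (2 * (E.card + 1))) := by
      have := Finset.sum_le_card_nsmul E (fun h => ρ (act h a) (act h b)) _
        (fun h hh => hab h hh)
      simpa [nsmul_eq_mul] using this
    have hfrac : (E.card : ℝ) / (2 * (E.card + 1)) < 1 := by
      rw [div_lt_one (by positivity)]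
      have : (0:ℝ) ≤ (E.card : ℝ) := Nat.cast_nonneg _
      linarith
    have h2 : (E.card : ℝ) * (s p₀ / (2 * (E.card + 1))) < s p₀ := by
      calc (E.card : ℝ) * (s p₀ / (2 * (E.card + 1)))
          = s p₀ * ((E.card : ℝ) / (2 * (E.card + 1))) := by ring
      _ < s p₀ * 1 := mul_lt_mul_of_pos_left hfrac hc
      _ = s p₀ := mul_one _
    have h3 : s p₀ ≤ s (a, b) := hp₀min habK
    linarith

lemma sofic_compose {d : ℕ → ℕ} {σ : ∀ i, G → Equiv.Perm (Fin (d i))}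
    (hσ : IsSoficApprox d σ) (g h : G) {θ : ℝ} (hθ : 0 < θ) :
    ∃ I : ℕ, ∀ i ≥ I, prop (fun j => ¬ σ i h ((σ i g)⁻¹ j) = σ i (h * g⁻¹) j) ≤ θ := by
  have ht : (1 : ℝ) - θ/3 < 1 := by linarith
  have e1 := (hσ.1 g⁻¹ g).eventually_const_lt ht
  have e2 := (hσ.1 1 1).eventually_const_lt ht
  have e3 := (hσ.1 h g⁻¹).eventually_const_lt ht
  obtain ⟨I, hI⟩ := Filter.eventually_atTop.mp (e1.and (e2.and e3))
  refine ⟨I, fun i hi => ?_⟩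
  obtain ⟨h1, h2, h3⟩ := hI i hi
  rcases Nat.eq_zero_or_pos (d i) with h0 | hn
  · have hz : ((d i : ℕ) : ℝ) = 0 := by rw [h0]; simp
    unfold prop
    rw [hz, div_zero]
    exact hθ.le
  have hincl : ∀ j : Fin (d i),
      (¬ σ i h ((σ i g)⁻¹ j) = σ i (h * g⁻¹) j) →
      ((¬ (σ i g⁻¹ (σ i g ((σ i g)⁻¹ j)) = σ i (g⁻¹ * g) ((σ i g)⁻¹ j))) ∨
       (¬ (σ i 1 (σ i 1 ((σ i g)⁻¹ j)) = σ i (1 * 1) ((σ i g)⁻¹ j))) ∨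
       (¬ (σ i h (σ i g⁻¹ j) = σ i (h * g⁻¹) j))) := by
    intro j hbad
    by_contra hcon
    push_neg at hcon
    obtain ⟨hA, hB, hC⟩ := hcon
    apply hbad
    rw [one_mul] at hB
    have hBk : σ i 1 ((σ i g)⁻¹ j) = (σ i g)⁻¹ j := (σ i 1).injective hB
    rw [inv_mul_cancel, show σ i g ((σ i g)⁻¹ j) = j from (σ i g).apply_symm_apply j, hBk] at hA
    rw [← hA]
    exact hC
  have hb1 : prop (fun j : Fin (d i) =>
      ¬ (σ i g⁻¹ (σ i g ((σ i g)⁻¹ j)) = σ i (g⁻¹ * g) ((σ i g)⁻¹ j))) ≤ θ/3 := by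
    have hperm := prop_perm ((σ i g)⁻¹)
      (fun k : Fin (d i) => ¬ (σ i g⁻¹ (σ i g k) = σ i (g⁻¹ * g) k))
    rw [hperm, prop_not hn]
    linarith
  have hb2 : prop (fun j : Fin (d i) =>
      ¬ (σ i 1 (σ i 1 ((σ i g)⁻¹ j)) = σ i (1 * 1) ((σ i g)⁻¹ j))) ≤ θ/3 := by
    have hperm := prop_perm ((σ i g)⁻¹)
      (fun k : Fin (d i) => ¬ (σ i 1 (σ i 1 k) = σ i (1 * 1) k))
    rw [hperm, prop_not hn]
    linarith
  have hb3 : prop (fun j : Fin (d i) => ¬ (σ i h (σ i g⁻¹ j) = σ i (h * g⁻¹) j)) ≤ θ/3 := by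
    rw [prop_not hn]
    linarith
  calc prop (fun j => ¬ σ i h ((σ i g)⁻¹ j) = σ i (h * g⁻¹) j)
      ≤ prop (fun j : Fin (d i) =>
        (¬ (σ i g⁻¹ (σ i g ((σ i g)⁻¹ j)) = σ i (g⁻¹ * g) ((σ i g)⁻¹ j))) ∨
        (¬ (σ i 1 (σ i 1 ((σ i g)⁻¹ j)) = σ i (1 * 1) ((σ i g)⁻¹ j))) ∨
        (¬ (σ i h (σ i g⁻¹ j) = σ i (h * g⁻¹) j))) := prop_mono hincl
  _ ≤ prop (fun j : Fin (d i) =>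
        ¬ (σ i g⁻¹ (σ i g ((σ i g)⁻¹ j)) = σ i (g⁻¹ * g) ((σ i g)⁻¹ j))) +
      prop (fun j : Fin (d i) =>
        (¬ (σ i 1 (σ i 1 ((σ i g)⁻¹ j)) = σ i (1 * 1) ((σ i g)⁻¹ j))) ∨
        (¬ (σ i h (σ i g⁻¹ j) = σ i (h * g⁻¹) j))) := prop_or_le _ _
  _ ≤ prop (fun j : Fin (d i) =>
        ¬ (σ i g⁻¹ (σ i g ((σ i g)⁻¹ j)) = σ i (g⁻¹ * g) ((σ i g)⁻¹ j))) +
      (prop (fun j : Fin (d i) =>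
        ¬ (σ i 1 (σ i 1 ((σ i g)⁻¹ j)) = σ i (1 * 1) ((σ i g)⁻¹ j))) +
       prop (fun j : Fin (d i) => ¬ (σ i h (σ i g⁻¹ j) = σ i (h * g⁻¹) j))) := by
        have := prop_or_le (fun j : Fin (d i) =>
          ¬ (σ i 1 (σ i 1 ((σ i g)⁻¹ j)) = σ i (1 * 1) ((σ i g)⁻¹ j)))
          (fun j : Fin (d i) => ¬ (σ i h (σ i g⁻¹ j) = σ i (h * g⁻¹) j))
        linarith
  _ ≤ θ/3 + (θ/3 + θ/3) := by linarith
  _ = θ := by ring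

end AuxTransfer

section GoodFnSec

variable {G X : Type*} [Group G] [TopologicalSpace X] [CompactSpace X]
variable {d : ℕ → ℕ} {σ : ∀ i, G → Equiv.Perm (Fin (d i))} {act : G → X → X} {ρ : X → X → ℝ}

/-- The key pointwise-approximation property of test functions on `X^G`. -/
def GoodFn (d : ℕ → ℕ) (σ : ∀ i, G → Equiv.Perm (Fin (d i))) (act : G → X → X)
    (ρ : X → X → ℝ) (p : C((G → X), ℝ)) : Prop :=
  ∀ ε : ℝ, 0 < ε → ∃ (E : Finset G) (η : ℝ) (I : ℕ), 0 < η ∧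
    ∀ i, I ≤ i → ∀ x ∈ MapSp act ρ E η (σ i),
      1 - ε ≤ prop (fun j => |p (phiX (σ i) x j) - p (PsiMap act (x j))| ≤ ε)

lemma goodFn_const (hd : ∀ i, 0 < d i) (r : ℝ) :
    GoodFn d σ act ρ (algebraMap ℝ C((G → X), ℝ) r) := by
  intro ε hε
  refine ⟨∅, 1, 0, one_pos, fun i _ x _ => ?_⟩
  have h1 : prop (fun j : Fin (d i) =>
      |algebraMap ℝ C((G → X), ℝ) r (phiX (σ i) x j) -
        algebraMap ℝ C((G → X), ℝ) r (PsiMap act (x j))| ≤ ε) = 1 :=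
    prop_true (hd i) (fun j => by
      simp only [Algebra.algebraMap_eq_smul_one, ContinuousMap.smul_apply,
        ContinuousMap.one_apply, smul_eq_mul, mul_one, sub_self, abs_zero]
      exact hε.le)
  rw [h1]
  linarith

lemma goodFn_add (hd : ∀ i, 0 < d i) {p q : C((G → X), ℝ)}
    (hp : GoodFn d σ act ρ p) (hq : GoodFn d σ act ρ q) :
    GoodFn d σ act ρ (p + q) := by
  intro ε hε
  obtain ⟨E₁, η₁, I₁, hη₁, hp'⟩ := hp (ε/2) (by positivity)
  obtain ⟨E₂, η₂, I₂, hη₂, hq'⟩ := hq (ε/2) (by positivity)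
  refine ⟨E₁ ∪ E₂, min η₁ η₂, max I₁ I₂, lt_min hη₁ hη₂, fun i hi x hx => ?_⟩
  have hx₁ : x ∈ MapSp act ρ E₁ η₁ (σ i) := fun g hg =>
    lt_of_lt_of_le (hx g (Finset.mem_union_left _ hg)) (min_le_left _ _)
  have hx₂ : x ∈ MapSp act ρ E₂ η₂ (σ i) := fun g hg =>
    lt_of_lt_of_le (hx g (Finset.mem_union_right _ hg)) (min_le_right _ _)
  have g₁ := hp' i (le_trans (le_max_left _ _) hi) x hx₁
  have g₂ := hq' i (le_trans (le_max_right _ _) hi) x hx₂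
  have hand := one_sub_prop_and (hd i)
    (fun j => |p (phiX (σ i) x j) - p (PsiMap act (x j))| ≤ ε/2)
    (fun j => |q (phiX (σ i) x j) - q (PsiMap act (x j))| ≤ ε/2)
  have hmono := prop_mono (n := d i)
    (P := fun j => (|p (phiX (σ i) x j) - p (PsiMap act (x j))| ≤ ε/2) ∧
      (|q (phiX (σ i) x j) - q (PsiMap act (x j))| ≤ ε/2))
    (Q := fun j => |(p + q) (phiX (σ i) x j) - (p + q) (PsiMap act (x j))| ≤ ε)
    (fun j hj => by
      obtain ⟨hjp, hjq⟩ := hj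
      have heq : (p + q) (phiX (σ i) x j) - (p + q) (PsiMap act (x j)) =
          (p (phiX (σ i) x j) - p (PsiMap act (x j))) +
          (q (phiX (σ i) x j) - q (PsiMap act (x j))) := by
        simp only [ContinuousMap.add_apply]
        ring
      rw [heq]
      calc |_ + _| ≤ _ + _ := abs_add_le _ _
      _ ≤ ε/2 + ε/2 := add_le_add hjp hjq
      _ = ε := by ring)
  linarith

lemma goodFn_mul (hd : ∀ i, 0 < d i) {p q : C((G → X), ℝ)}
    (hp : GoodFn d σ act ρ p) (hq : GoodFn d σ act ρ q) :
    GoodFn d σ act ρ (p * q) := by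
  intro ε hε
  set ε' : ℝ := min (ε/2) (ε / (2 * (‖p‖ + ‖q‖ + 1))) with hε'def
  have hε' : 0 < ε' := lt_min (by positivity) (by positivity)
  obtain ⟨E₁, η₁, I₁, hη₁, hp'⟩ := hp ε' hε'
  obtain ⟨E₂, η₂, I₂, hη₂, hq'⟩ := hq ε' hε'
  refine ⟨E₁ ∪ E₂, min η₁ η₂, max I₁ I₂, lt_min hη₁ hη₂, fun i hi x hx => ?_⟩
  have hx₁ : x ∈ MapSp act ρ E₁ η₁ (σ i) := fun g hg =>
    lt_of_lt_of_le (hx g (Finset.mem_union_left _ hg)) (min_le_left _ _)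
  have hx₂ : x ∈ MapSp act ρ E₂ η₂ (σ i) := fun g hg =>
    lt_of_lt_of_le (hx g (Finset.mem_union_right _ hg)) (min_le_right _ _)
  have g₁ := hp' i (le_trans (le_max_left _ _) hi) x hx₁
  have g₂ := hq' i (le_trans (le_max_right _ _) hi) x hx₂
  have hand := one_sub_prop_and (hd i)
    (fun j => |p (phiX (σ i) x j) - p (PsiMap act (x j))| ≤ ε')
    (fun j => |q (phiX (σ i) x j) - q (PsiMap act (x j))| ≤ ε')
  have hmono := prop_mono (n := d i)
    (P := fun j => (|p (phiX (σ i) x j) - p (PsiMap act (x j))| ≤ ε') ∧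
      (|q (phiX (σ i) x j) - q (PsiMap act (x j))| ≤ ε'))
    (Q := fun j => |(p * q) (phiX (σ i) x j) - (p * q) (PsiMap act (x j))| ≤ ε)
    (fun j hj => by
      obtain ⟨hjp, hjq⟩ := hj
      set a := phiX (σ i) x j
      set b := PsiMap act (x j)
      have heq : (p * q) a - (p * q) b = p a * (q a - q b) + q b * (p a - p b) := by
        simp only [ContinuousMap.mul_apply]
        ring
      have hpa : |p a| ≤ ‖p‖ := by
        rw [← Real.norm_eq_abs]; exact p.norm_coe_le_norm a
      have hqb : |q b| ≤ ‖q‖ := by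
        rw [← Real.norm_eq_abs]; exact q.norm_coe_le_norm b
      have habs : |(p * q) a - (p * q) b| ≤ ‖p‖ * ε' + ‖q‖ * ε' := by
        rw [heq]
        calc |p a * (q a - q b) + q b * (p a - p b)|
            ≤ |p a * (q a - q b)| + |q b * (p a - p b)| := abs_add_le _ _
        _ = |p a| * |q a - q b| + |q b| * |p a - p b| := by rw [abs_mul, abs_mul]
        _ ≤ ‖p‖ * ε' + ‖q‖ * ε' := by
            refine add_le_add ?_ ?_
            · exact mul_le_mul hpa hjq (abs_nonneg _) (norm_nonneg _)
            · exact mul_le_mul hqb hjp (abs_nonneg _) (norm_nonneg _)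
      have hfinal : ‖p‖ * ε' + ‖q‖ * ε' ≤ ε := by
        have h1 : ε' ≤ ε / (2 * (‖p‖ + ‖q‖ + 1)) := min_le_right _ _
        have hp0 : (0:ℝ) ≤ ‖p‖ := norm_nonneg _
        have hq0 : (0:ℝ) ≤ ‖q‖ := norm_nonneg _
        have h2 : (‖p‖ + ‖q‖) * ε' ≤ (‖p‖ + ‖q‖) * (ε / (2 * (‖p‖ + ‖q‖ + 1))) := by
          apply mul_le_mul_of_nonneg_left h1 (by positivity)
        have hfr : (‖p‖ + ‖q‖) / (2 * (‖p‖ + ‖q‖ + 1)) ≤ 1/2 := by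
          rw [div_le_div_iff₀ (by positivity) (by norm_num)]
          nlinarith
        have h3 : (‖p‖ + ‖q‖) * (ε / (2 * (‖p‖ + ‖q‖ + 1))) ≤ ε / 2 := by
          calc (‖p‖ + ‖q‖) * (ε / (2 * (‖p‖ + ‖q‖ + 1)))
              = ε * ((‖p‖ + ‖q‖) / (2 * (‖p‖ + ‖q‖ + 1))) := by ring
          _ ≤ ε * (1/2) := mul_le_mul_of_nonneg_left hfr hε.le
          _ = ε / 2 := by ring
        nlinarith
      exact habs.trans hfinal)
  have hεε : ε' ≤ ε/2 := min_le_left _ _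
  linarith

set_option maxHeartbeats 1000000 in
lemma goodFn_gen (hd : ∀ i, 0 < d i) (hσ : IsSoficApprox d σ)
    (hact : IsActionByHomeos G X act) (hρ : IsCtsPseudoMetric ρ)
    (hρgen : IsDynGenerating act ρ) (f : C(X, ℝ)) (g : G) :
    GoodFn d σ act ρ (f.comp ⟨fun y : G → X => y g, continuous_apply g⟩) := by
  intro ε hε
  obtain ⟨E₀, η₀, hη₀, hUC⟩ := unif_cont hact hρ hρgen f hε
  set t : ℝ := η₀ / 3 with htdef
  have ht : 0 < t := by positivity
  set θ : ℝ := ε / (3 * (E₀.card + 1)) with hθdef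
  have hθ : 0 < θ := by positivity
  set η : ℝ := t * Real.sqrt θ with hηdef
  have hηpos : 0 < η := by positivity
  have hη2 : η ^ 2 / t ^ 2 = θ := by
    rw [hηdef, mul_pow, Real.sq_sqrt hθ.le]
    field_simp
  have hsof : ∀ h : G, ∃ I, ∀ i ≥ I,
      prop (fun j => ¬ σ i h ((σ i g)⁻¹ j) = σ i (h * g⁻¹) j) ≤ θ :=
    fun h => sofic_compose hσ g h hθ
  choose Ifun hIfun using hsof
  refine ⟨E₀ ∪ E₀.image (fun h => h * g⁻¹), η, E₀.sup Ifun, hηpos, fun i hi x hx => ?_⟩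
  have hn := hd i
  set Bad : G → Fin (d i) → Prop := fun h j =>
    (t < ρ (act h (x ((σ i g)⁻¹ j))) (x (σ i h ((σ i g)⁻¹ j)))) ∨
    (¬ σ i h ((σ i g)⁻¹ j) = σ i (h * g⁻¹) j) ∨
    (t < ρ (act (h * g⁻¹) (x j)) (x (σ i (h * g⁻¹) j))) with hBaddef
  have hBadbound : ∀ h ∈ E₀, prop (Bad h) ≤ 3 * θ := by
    intro h hh
    have hb1 : prop (fun j : Fin (d i) =>
        t < ρ (act h (x ((σ i g)⁻¹ j))) (x (σ i h ((σ i g)⁻¹ j)))) ≤ θ := by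
      have hr := hx h (Finset.mem_union_left _ hh)
      unfold rho2 at hr
      have hmic : prop (fun k : Fin (d i) => t < ρ (act h (x k)) (x (σ i h k))) ≤ θ := by
        have h0 := prop_sq_le (hd i) (fun k => ρ (act h (x k)) (x (σ i h k)))
          (fun k => rho_nonneg hρ _ _) ht hr
        exact h0.trans (le_of_eq hη2)
      have hpp := prop_perm ((σ i g)⁻¹)
        (fun k : Fin (d i) => t < ρ (act h (x k)) (x (σ i h k)))
      exact (le_of_eq hpp).trans hmic
    have hb2 : prop (fun j : Fin (d i) => ¬ σ i h ((σ i g)⁻¹ j) = σ i (h * g⁻¹) j) ≤ θ :=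
      hIfun h i (le_trans (Finset.le_sup hh) hi)
    have hb3 : prop (fun j : Fin (d i) =>
        t < ρ (act (h * g⁻¹) (x j)) (x (σ i (h * g⁻¹) j))) ≤ θ := by
      have hr := hx (h * g⁻¹) (Finset.mem_union_right _ (Finset.mem_image_of_mem _ hh))
      unfold rho2 at hr
      have h0 := prop_sq_le (hd i) (fun k => ρ (act (h * g⁻¹) (x k)) (x (σ i (h * g⁻¹) k)))
        (fun k => rho_nonneg hρ _ _) ht hr
      exact h0.trans (le_of_eq hη2)
    have hsplit : prop (Bad h) ≤
        prop (fun j : Fin (d i) =>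
          t < ρ (act h (x ((σ i g)⁻¹ j))) (x (σ i h ((σ i g)⁻¹ j)))) +
        (prop (fun j : Fin (d i) => ¬ σ i h ((σ i g)⁻¹ j) = σ i (h * g⁻¹) j) +
         prop (fun j : Fin (d i) =>
           t < ρ (act (h * g⁻¹) (x j)) (x (σ i (h * g⁻¹) j)))) := by
      refine le_trans (prop_or_le _ _) ?_
      have h4 := prop_or_le (fun j : Fin (d i) => ¬ σ i h ((σ i g)⁻¹ j) = σ i (h * g⁻¹) j)
        (fun j : Fin (d i) => t < ρ (act (h * g⁻¹) (x j)) (x (σ i (h * g⁻¹) j)))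
      linarith
    linarith
  have hbadAll : prop (fun j => ∃ h ∈ E₀, Bad h j) ≤ ε := by
    refine le_trans (prop_exists_le E₀ Bad) ?_
    have hsum : ∑ h ∈ E₀, prop (Bad h) ≤ E₀.card * (3 * θ) := by
      have h5 := Finset.sum_le_card_nsmul E₀ (fun h => prop (Bad h)) (3 * θ) hBadbound
      simpa [nsmul_eq_mul] using h5
    refine hsum.trans ?_
    have hcal : (E₀.card : ℝ) * (3 * θ) = ε * ((3 * E₀.card) / (3 * (E₀.card + 1))) := by
      rw [hθdef]; field_simp
    rw [hcal]
    have hfrac : (3 * (E₀.card : ℝ)) / (3 * (E₀.card + 1)) ≤ 1 := by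
      rw [div_le_one (by positivity)]
      have : (0:ℝ) ≤ (E₀.card : ℝ) := Nat.cast_nonneg _
      linarith
    calc ε * ((3 * (E₀.card : ℝ)) / (3 * (E₀.card + 1))) ≤ ε * 1 := by
          exact mul_le_mul_of_nonneg_left hfrac hε.le
    _ = ε := mul_one _
  have hgoodprop : 1 - ε ≤ prop (fun j : Fin (d i) => ¬ ∃ h ∈ E₀, Bad h j) := by
    rw [prop_not hn]
    linarith
  refine le_trans hgoodprop (prop_mono ?_)
  intro j hj
  push_neg at hj
  show |f (x ((σ i g)⁻¹ j)) - f (act g⁻¹ (x j))| ≤ ε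
  refine le_of_lt (hUC _ _ ?_)
  intro h hh
  have hb := hj h hh
  simp only [hBaddef, not_or, not_lt, not_not] at hb
  obtain ⟨hb1, hb2, hb3⟩ := hb
  have hstep : act h (act g⁻¹ (x j)) = act (h * g⁻¹) (x j) := (hact.mul h g⁻¹ (x j)).symm
  rw [hstep]
  calc ρ (act h (x ((σ i g)⁻¹ j))) (act (h * g⁻¹) (x j))
      ≤ ρ (act h (x ((σ i g)⁻¹ j))) (x (σ i h ((σ i g)⁻¹ j))) +
        ρ (x (σ i h ((σ i g)⁻¹ j))) (act (h * g⁻¹) (x j)) := hρ.triangle _ _ _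
  _ ≤ t + t := by
      refine add_le_add hb1 ?_
      rw [hb2, hρ.symm]
      exact hb3
  _ ≤ η₀ := by rw [htdef]; linarith

lemma goodFn_all [TopologicalSpace.MetrizableSpace X]
    (hd : ∀ i, 0 < d i) (hσ : IsSoficApprox d σ)
    (hact : IsActionByHomeos G X act) (hρ : IsCtsPseudoMetric ρ)
    (hρgen : IsDynGenerating act ρ) (p : C((G → X), ℝ)) :
    GoodFn d σ act ρ p := by
  classical
  set S : Set C((G → X), ℝ) :=
    Set.range (fun fg : C(X, ℝ) × G =>
      fg.1.comp ⟨fun y : G → X => y fg.2, continuous_apply fg.2⟩) with hSdef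
  have hAgood : ∀ q ∈ Algebra.adjoin ℝ S, GoodFn d σ act ρ q := by
    intro q hq
    refine Algebra.adjoin_induction ?_ ?_ ?_ ?_ hq
    · rintro q' ⟨⟨f, g⟩, rfl⟩
      exact goodFn_gen hd hσ hact hρ hρgen f g
    · intro r
      exact goodFn_const hd r
    · intro a b _ _ iha ihb
      exact goodFn_add hd iha ihb
    · intro a b _ _ iha ihb
      exact goodFn_mul hd iha ihb
  have hsep : (Algebra.adjoin ℝ S).SeparatesPoints := by
    intro y z hyz
    have hg : ∃ g, y g ≠ z g := by
      by_contra hc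
      push_neg at hc
      exact hyz (funext hc)
    obtain ⟨g, hg⟩ := hg
    letI : MetricSpace X := TopologicalSpace.metrizableSpaceMetric X
    set f : C(X, ℝ) := ⟨fun w => dist w (y g), continuous_id.dist continuous_const⟩ with hfdef
    refine ⟨_, ⟨f.comp ⟨fun w : G → X => w g, continuous_apply g⟩,
      Algebra.subset_adjoin ⟨(f, g), rfl⟩, rfl⟩, ?_⟩
    simp only [ContinuousMap.comp_apply, ContinuousMap.coe_mk, hfdef]
    rw [dist_self]
    exact fun hcon => hg (dist_eq_zero.mp hcon.symm).symm |>.elim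
  have htop := ContinuousMap.subalgebra_topologicalClosure_eq_top_of_separatesPoints _ hsep
  intro ε hε
  have hmem : p ∈ (Algebra.adjoin ℝ S).topologicalClosure := by
    rw [htop]; trivial
  have hcl : p ∈ closure ((Algebra.adjoin ℝ S : Subalgebra ℝ C((G → X), ℝ)) :
      Set C((G → X), ℝ)) := hmem
  obtain ⟨q, hqA, hdq⟩ := Metric.mem_closure_iff.mp hcl (ε/3) (by positivity)
  obtain ⟨E, η, I, hη, hgood⟩ := hAgood q hqA (ε/3) (by positivity)
  refine ⟨E, η, I, hη, fun i hi x hx => ?_⟩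
  have h1 := hgood i hi x hx
  have h2 := prop_mono (n := d i)
    (P := fun j => |q (phiX (σ i) x j) - q (PsiMap act (x j))| ≤ ε/3)
    (Q := fun j => |p (phiX (σ i) x j) - p (PsiMap act (x j))| ≤ ε)
    (fun j hj => by
      set a := phiX (σ i) x j
      set b := PsiMap act (x j)
      have da : |p a - q a| ≤ ε/3 := by
        rw [← Real.dist_eq]
        exact le_of_lt (lt_of_le_of_lt (ContinuousMap.dist_apply_le_dist a) hdq)
      have db : |q b - p b| ≤ ε/3 := by
        rw [← Real.dist_eq, dist_comm]
        exact le_of_lt (lt_of_le_of_lt (ContinuousMap.dist_apply_le_dist b) hdq)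
      have heq : p a - p b = (p a - q a) + (q a - q b) + (q b - p b) := by ring
      calc |p a - p b| = |(p a - q a) + (q a - q b) + (q b - p b)| := by rw [heq]
      _ ≤ |(p a - q a) + (q a - q b)| + |q b - p b| := abs_add_le _ _
      _ ≤ |p a - q a| + |q a - q b| + |q b - p b| := by
          have := abs_add_le (p a - q a) (q a - q b)
          linarith
      _ ≤ ε/3 + ε/3 + ε/3 := by
          have := hj
          linarith [da, db, hj]
      _ = ε := by ring)
  linarith

end GoodFnSec

end SoficPaper

open SoficPaper

/-- Lemma 2.7(i). Measure-theoretic microstates push forward, via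
`x ↦ (φ_x)_*(u_{dᵢ})`, into any given weak* neighborhood of `Ψ_*μ`. -/
theorem transfer_lemma_i {G X : Type*} [Group G] [Countable G]
    [TopologicalSpace X] [CompactSpace X] [TopologicalSpace.MetrizableSpace X]
    [MeasurableSpace X] [BorelSpace X]
    (d : ℕ → ℕ) (hd : ∀ i, 0 < d i) (σ : ∀ i, G → Equiv.Perm (Fin (d i)))
    (hσ : IsSoficApprox d σ)
    (act : G → X → X) (hact : IsActionByHomeos G X act)
    (ρ : X → X → ℝ) (hρ : IsCtsPseudoMetric ρ) (hρgen : IsDynGenerating act ρ)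
    (μ : MeasureTheory.Measure X) (hμProb : MeasureTheory.IsProbabilityMeasure μ)
    (hμinv : ∀ g : G, MeasureTheory.Measure.map (act g) μ = μ)
    (hΨ : Measurable (PsiMap act)) :
    ∀ O : Set (MeasureTheory.ProbabilityMeasure (G → X)), IsOpen O →
      pmMap μ hμProb hΨ ∈ O →
      ∃ (F : Finset G) (L : Finset C(X, ℝ)) (δ : ℝ) (I : ℕ), 0 < δ ∧
        ∀ i ≥ I, ∀ x ∈ MapMeas act ρ μ F L δ (σ i),
          empDist (hd i) (phiX (σ i) x) ∈ O := by
  intro O hO hPO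
  by_contra hcon
  push_neg at hcon
  letI : MetricSpace X := TopologicalSpace.metrizableSpaceMetric X
  obtain ⟨e, he⟩ := exists_surjective_nat G
  have hCne : Nonempty C(X, ℝ) := ⟨0⟩
  obtain ⟨D, hD⟩ := TopologicalSpace.exists_dense_seq C(X, ℝ)
  set Ffun : ℕ → Finset G := fun n => (Finset.range (n+1)).image e with hFfun
  set Lfun : ℕ → Finset C(X, ℝ) := fun n => (Finset.range (n+1)).image D with hLfun
  have hδn : ∀ n : ℕ, (0:ℝ) < 1/(n+1) := fun n => by positivity
  have hsel : ∀ n : ℕ, ∃ i, n ≤ i ∧ ∃ x ∈ MapMeas act ρ μ (Ffun n) (Lfun n) (1/(n+1)) (σ i),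
      empDist (hd i) (phiX (σ i) x) ∉ O := by
    intro n
    obtain ⟨i, hi, x, hx, hnot⟩ := hcon (Ffun n) (Lfun n) (1/(n+1)) n (hδn n)
    exact ⟨i, hi, x, hx, hnot⟩
  choose ifun hin xfun hxmem hxnot using hsel
  set P : MeasureTheory.ProbabilityMeasure (G → X) := pmMap μ hμProb hΨ with hPdef
  set ν : ℕ → MeasureTheory.ProbabilityMeasure (G → X) :=
    fun n => empDist (hd (ifun n)) (phiX (σ (ifun n)) (xfun n)) with hνdef
  have hΨcont : Continuous (PsiMap act) := continuous_pi (fun g => hact.continuous g⁻¹)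
  have hconv : Tendsto ν atTop (𝓝 P) := by
    rw [MeasureTheory.ProbabilityMeasure.tendsto_iff_forall_integral_tendsto]
    intro fb
    rw [Metric.tendsto_atTop]
    intro ε hε
    set p : C((G → X), ℝ) := fb.toContinuousMap with hpdef
    set pΨ : C(X, ℝ) := p.comp ⟨PsiMap act, hΨcont⟩ with hpΨdef
    have hPint : ∫ ω, fb ω ∂(P : MeasureTheory.Measure (G → X)) = ∫ w, pΨ w ∂μ := by
      show ∫ ω, fb ω ∂(μ.map (PsiMap act)) = _
      rw [MeasureTheory.integral_map hΨ.aemeasurable fb.continuous.aestronglyMeasurable]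
      rfl
    have hνint : ∀ n, ∫ ω, fb ω ∂((ν n : MeasureTheory.Measure (G → X))) =
        (d (ifun n) : ℝ)⁻¹ * ∑ j, p (phiX (σ (ifun n)) (xfun n) j) := by
      intro n
      show ∫ ω, fb ω ∂((unif (d (ifun n))).map (phiX (σ (ifun n)) (xfun n))) = _
      rw [MeasureTheory.integral_map (measurable_of_fin _).aemeasurable
        fb.continuous.aestronglyMeasurable]
      rw [unif, MeasureTheory.integral_smul_measure,
        MeasureTheory.integral_fintype Integrable.of_finite]
      simp only [MeasureTheory.measureReal_def, MeasureTheory.Measure.count_singleton, ENNReal.toReal_one, one_smul,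
        smul_eq_mul, one_mul, ENNReal.toReal_inv, ENNReal.toReal_natCast]
      rfl
    set ε' : ℝ := ε / (8 * (1 + 2 * ‖p‖)) with hε'def
    have hnorm : (0:ℝ) ≤ ‖p‖ := norm_nonneg _
    have hε' : 0 < ε' := by positivity
    obtain ⟨E, η, I₀, hη, hgood⟩ := goodFn_all hd hσ hact hρ hρgen p ε' hε'
    obtain ⟨m, hm⟩ := Metric.denseRange_iff.mp hD pΨ (ε/8) (by positivity)
    choose kf hkf using he
    obtain ⟨N2, hN2⟩ := exists_nat_gt (1/η)
    obtain ⟨N4, hN4⟩ := exists_nat_gt (8/ε)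
    set N := max (max I₀ (E.sup kf)) (max m (max N2 N4)) with hNdef
    refine ⟨N, fun n hn => ?_⟩
    have hnn := hin n
    have hiI : I₀ ≤ ifun n :=
      le_trans (le_trans (le_trans (le_max_left _ _) (le_max_left _ _)) hn) hnn
    have hEsub : E ⊆ Ffun n := by
      intro g hg
      have h1 : kf g ≤ E.sup kf := Finset.le_sup hg
      have h2 : E.sup kf ≤ N := le_trans (le_max_right _ _) (le_max_left _ _)
      refine Finset.mem_image.mpr ⟨kf g, Finset.mem_range.mpr ?_, hkf g⟩
      omega
    have hN2n : N2 ≤ n := le_trans (le_trans (le_trans (le_max_left _ _)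
      (le_max_right _ _)) (le_max_right _ _)) hn
    have hN4n : N4 ≤ n := le_trans (le_trans (le_trans (le_max_right _ _)
      (le_max_right _ _)) (le_max_right _ _)) hn
    have hmn : m ≤ n := le_trans (le_trans (le_max_left _ _) (le_max_right _ _)) hn
    have hδη : 1/((n:ℝ)+1) ≤ η := by
      have hlt : 1/η < (n:ℝ)+1 := by
        refine lt_of_lt_of_le hN2 ?_
        have : (N2 : ℝ) ≤ n := by exact_mod_cast hN2n
        linarith
      have h1 : 1 < ((n:ℝ)+1) * η := by
        have := (div_lt_iff₀ hη).mp hlt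
        linarith
      rw [div_le_iff₀ (by positivity)]
      nlinarith
    have hδε8 : 1/((n:ℝ)+1) ≤ ε/8 := by
      have hlt : 8/ε < (n:ℝ)+1 := by
        refine lt_of_lt_of_le hN4 ?_
        have : (N4 : ℝ) ≤ n := by exact_mod_cast hN4n
        linarith
      have h1 : 8 < ((n:ℝ)+1) * ε := by
        have := (div_lt_iff₀ hε).mp hlt
        linarith
      rw [div_le_div_iff₀ (by positivity) (by norm_num)]
      nlinarith
    have hqmem : D m ∈ Lfun n := Finset.mem_image.mpr ⟨m, Finset.mem_range.mpr (by omega), rfl⟩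
    have hxE : xfun n ∈ MapSp act ρ E η (σ (ifun n)) := fun g hg =>
      lt_of_lt_of_le ((hxmem n).1 g (hEsub hg)) hδη
    have hgn := hgood (ifun n) hiI (xfun n) hxE
    set nn := d (ifun n) with hnndef
    have hnnpos : 0 < nn := hd (ifun n)
    have hnnR : (0:ℝ) < nn := by exact_mod_cast hnnpos
    set a : Fin nn → ℝ :=
      fun j => p (phiX (σ (ifun n)) (xfun n) j) - p (PsiMap act (xfun n j)) with hadef
    have hbound : ∀ j, |a j| ≤ 2 * ‖p‖ := by
      intro j
      have h1 : |p (phiX (σ (ifun n)) (xfun n) j)| ≤ ‖p‖ := by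
        rw [← Real.norm_eq_abs]; exact p.norm_coe_le_norm _
      have h2 : |p (PsiMap act (xfun n j))| ≤ ‖p‖ := by
        rw [← Real.norm_eq_abs]; exact p.norm_coe_le_norm _
      calc |a j| ≤ |p (phiX (σ (ifun n)) (xfun n) j)| + |p (PsiMap act (xfun n j))| :=
        abs_sub _ _
      _ ≤ 2 * ‖p‖ := by linarith
    have hS1 : |(nn:ℝ)⁻¹ * ∑ j, a j| ≤ ε/8 := by
      have h0 := avg_abs_le hnnpos a hε'.le (by positivity) hbound hgn
      have hcalc : ε' + ε' * (2 * ‖p‖) = ε/8 := by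
        rw [hε'def]; field_simp
      linarith
    have hq := (hxmem n).2 (D m) hqmem
    have hS2 : |(nn:ℝ)⁻¹ * ∑ j, (pΨ (xfun n j) - D m (xfun n j))| ≤ ε/8 := by
      have hptw : ∀ j : Fin nn, |pΨ (xfun n j) - D m (xfun n j)| ≤ ε/8 := by
        intro j
        rw [← Real.dist_eq]
        exact le_of_lt (lt_of_le_of_lt (ContinuousMap.dist_apply_le_dist _) hm)
      have hsum : |∑ j : Fin nn, (pΨ (xfun n j) - D m (xfun n j))| ≤ (nn:ℝ) * (ε/8) := by
        refine le_trans (Finset.abs_sum_le_sum_abs _ _) ?_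
        have := Finset.sum_le_card_nsmul Finset.univ
          (fun j : Fin nn => |pΨ (xfun n j) - D m (xfun n j)|) (ε/8) (fun j _ => hptw j)
        simpa [nsmul_eq_mul] using this
      calc |(nn:ℝ)⁻¹ * ∑ j, (pΨ (xfun n j) - D m (xfun n j))|
          = (nn:ℝ)⁻¹ * |∑ j, (pΨ (xfun n j) - D m (xfun n j))| := by
            rw [abs_mul, abs_of_nonneg (by positivity)]
      _ ≤ (nn:ℝ)⁻¹ * ((nn:ℝ) * (ε/8)) := by gcongr
      _ = ε/8 := by field_simp
    have hintq : MeasureTheory.Integrable (fun w => D m w) μ :=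
      (D m).continuous.integrable_of_hasCompactSupport (HasCompactSupport.of_compactSpace _)
    have hintp : MeasureTheory.Integrable (fun w => pΨ w) μ :=
      pΨ.continuous.integrable_of_hasCompactSupport (HasCompactSupport.of_compactSpace _)
    have hS4 : |∫ w, D m w ∂μ - ∫ w, pΨ w ∂μ| ≤ ε/8 := by
      rw [← MeasureTheory.integral_sub hintq hintp]
      have hbnd : ∀ w, ‖D m w - pΨ w‖ ≤ ε/8 := by
        intro w
        rw [Real.norm_eq_abs, ← Real.dist_eq, dist_comm]
        exact le_of_lt (lt_of_le_of_lt (ContinuousMap.dist_apply_le_dist _) hm)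
      calc |∫ w, (D m w - pΨ w) ∂μ| = ‖∫ w, (D m w - pΨ w) ∂μ‖ := (Real.norm_eq_abs _).symm
      _ ≤ (ε/8) * (μ Set.univ).toReal :=
          MeasureTheory.norm_integral_le_of_norm_le_const
            (MeasureTheory.ae_of_all μ hbnd)
      _ = ε/8 := by rw [hμProb.measure_univ]; simp
    rw [Real.dist_eq, hνint n, hPint]
    have hsplitA : (nn:ℝ)⁻¹ * ∑ j, p (phiX (σ (ifun n)) (xfun n) j) -
        (nn:ℝ)⁻¹ * ∑ j, pΨ (xfun n j) = (nn:ℝ)⁻¹ * ∑ j, a j := by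
      rw [← mul_sub, ← Finset.sum_sub_distrib]
      rfl
    have hsplitB : (nn:ℝ)⁻¹ * ∑ j, pΨ (xfun n j) - (nn:ℝ)⁻¹ * ∑ j, D m (xfun n j) =
        (nn:ℝ)⁻¹ * ∑ j, (pΨ (xfun n j) - D m (xfun n j)) := by
      rw [← mul_sub, ← Finset.sum_sub_distrib]
    have t1 : |(nn:ℝ)⁻¹ * ∑ j, p (phiX (σ (ifun n)) (xfun n) j) -
        (nn:ℝ)⁻¹ * ∑ j, pΨ (xfun n j)| ≤ ε/8 := by rw [hsplitA]; exact hS1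
    have t2 : |(nn:ℝ)⁻¹ * ∑ j, pΨ (xfun n j) - (nn:ℝ)⁻¹ * ∑ j, D m (xfun n j)| ≤ ε/8 := by
      rw [hsplitB]; exact hS2
    have t3 : |(nn:ℝ)⁻¹ * ∑ j, D m (xfun n j) - ∫ w, D m w ∂μ| ≤ ε/8 :=
      le_trans (le_of_lt hq) hδε8
    have tri1 := abs_sub_le ((nn:ℝ)⁻¹ * ∑ j, p (phiX (σ (ifun n)) (xfun n) j))
      ((nn:ℝ)⁻¹ * ∑ j, pΨ (xfun n j)) ((nn:ℝ)⁻¹ * ∑ j, D m (xfun n j))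
    have tri2 := abs_sub_le ((nn:ℝ)⁻¹ * ∑ j, p (phiX (σ (ifun n)) (xfun n) j))
      ((nn:ℝ)⁻¹ * ∑ j, D m (xfun n j)) (∫ w, D m w ∂μ)
    have tri3 := abs_sub_le ((nn:ℝ)⁻¹ * ∑ j, p (phiX (σ (ifun n)) (xfun n) j))
      (∫ w, D m w ∂μ) (∫ w, pΨ w ∂μ)
    calc |(nn:ℝ)⁻¹ * ∑ j, p (phiX (σ (ifun n)) (xfun n) j) - ∫ w, pΨ w ∂μ| ≤
        |(nn:ℝ)⁻¹ * ∑ j, p (phiX (σ (ifun n)) (xfun n) j) - ∫ w, D m w ∂μ| +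
        |∫ w, D m w ∂μ - ∫ w, pΨ w ∂μ| := tri3
    _ ≤ ε/8 + ε/8 + ε/8 + ε/8 := by linarith
    _ < ε := by linarith
  have hev := hconv.eventually (hO.mem_nhds hPO)
  obtain ⟨n, hn⟩ := hev.exists
  exact hxnot n hn
end
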